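/- arXiv:1812.05073 — 6 statements merged into one kernel-verified Lean document; each statement's English description precedes it below -/
import Mathlib

section
/- Let n ≥ 1, let B be a nonnegative irreducible n×n real matrix, let D be a nonnegative diagonal n×n real matrix, and set J = B − D. Then there exists a real number λ0 that is an eigenvalue of J such that every complex eigenvalue λ of J satisfies Re(λ) ≤ λ0; moreover, there exists a vector Z ∈ ℝ^n with Z > 0 componentwise and J Z = λ0 Z, and every vector Y ∈ ℝ^n satisfying J Y = λ0 Y is a scalar multiple of Z. -/
open Matrix Finset Polynomial

section PerronAux

lemma onePlusPow_mulVec {R : Type*} [CommRing R] {n : Type*} [Fintype n] [DecidableEq n]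
    (M : Matrix n n R) (v : n → R) (μ : R) (h : M.mulVec v = μ • v) (m : ℕ) :
    ((1 + M) ^ m).mulVec v = (1 + μ) ^ m • v := by
  induction m with
  | zero => simp
  | succ m ih =>
    rw [pow_succ, ← Matrix.mulVec_mulVec]
    have h1 : (1 + M).mulVec v = (1 + μ) • v := by
      rw [Matrix.add_mulVec, Matrix.one_mulVec, h, add_smul, one_smul]
    rw [h1, Matrix.mulVec_smul, ih, smul_smul, pow_succ]
    ring_nf

lemma pow_entry_le {n : Type*} [Fintype n] [DecidableEq n]
    (M N : Matrix n n ℝ) (hM : ∀ i j, 0 ≤ M i j) (hMN : ∀ i j, M i j ≤ N i j) (k : ℕ) :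
    ∀ i j, 0 ≤ (M ^ k) i j ∧ (M ^ k) i j ≤ (N ^ k) i j := by
  induction k with
  | zero => intro i j; simp [Matrix.one_apply]; split <;> simp
  | succ k ih =>
    intro i j
    rw [pow_succ, pow_succ, Matrix.mul_apply, Matrix.mul_apply]
    constructor
    · exact Finset.sum_nonneg fun l _ => mul_nonneg (ih i l).1 (hM l j)
    · exact Finset.sum_le_sum fun l _ =>
        mul_le_mul (ih i l).2 (hMN l j) (hM l j) (le_trans (ih i l).1 (ih i l).2)

lemma one_add_pow_entry {n : Type*} [Fintype n] [DecidableEq n]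
    (A : Matrix n n ℝ) (hA : ∀ i j, 0 ≤ A i j) (m : ℕ) :
    (∀ i j, 0 ≤ ((1 + A) ^ m) i j) ∧
      ∀ k, k ≤ m → ∀ i j, (A ^ k) i j ≤ ((1 + A) ^ m) i j := by
  induction m with
  | zero =>
    refine ⟨fun i j => ?_, fun k hk i j => ?_⟩
    · simp [Matrix.one_apply]; split <;> simp
    · interval_cases k; simp
  | succ m ih =>
    have hexp : (1 + A) ^ (m + 1) = (1 + A) ^ m + (1 + A) ^ m * A := by
      rw [pow_succ, mul_add, mul_one]
    have hnn : ∀ i j, 0 ≤ ((1 + A) ^ (m+1)) i j := by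
      intro i j
      rw [hexp, Matrix.add_apply, Matrix.mul_apply]
      exact add_nonneg (ih.1 i j)
        (Finset.sum_nonneg fun l _ => mul_nonneg (ih.1 i l) (hA l j))
    refine ⟨hnn, fun k hk i j => ?_⟩
    rcases Nat.lt_or_ge k (m + 1) with h | h
    · have hk' : k ≤ m := Nat.lt_succ_iff.mp h
      calc (A ^ k) i j ≤ ((1 + A) ^ m) i j := ih.2 k hk' i j
        _ ≤ ((1 + A) ^ (m+1)) i j := by
            rw [hexp, Matrix.add_apply]
            have : 0 ≤ ((1 + A) ^ m * A) i j := by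
              rw [Matrix.mul_apply]
              exact Finset.sum_nonneg fun l _ => mul_nonneg (ih.1 i l) (hA l j)
            linarith
    · have hk' : k = m + 1 := le_antisymm hk h
      subst hk'
      rw [pow_succ, hexp, Matrix.add_apply, Matrix.mul_apply, Matrix.mul_apply]
      have h2 : ∑ l, (A ^ m) i l * A l j ≤ ∑ l, ((1 + A) ^ m) i l * A l j :=
        Finset.sum_le_sum fun l _ => mul_le_mul_of_nonneg_right (ih.2 m le_rfl i l) (hA l j)
      linarith [ih.1 i j]

lemma map_pow_ringHom {R S : Type*} [CommRing R] [CommRing S] {n : Type*} [Fintype n]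
    [DecidableEq n] (M : Matrix n n R) (f : R →+* S) (k : ℕ) :
    (M ^ k).map f = (M.map f) ^ k := by
  induction k with
  | zero => simp [Matrix.map_one f f.map_zero f.map_one]
  | succ k ih => rw [pow_succ, pow_succ, Matrix.map_mul, ih]

lemma exists_eigenvector_of_root {n : ℕ} (M : Matrix (Fin n) (Fin n) ℝ) (lam : ℂ)
    (h : (Polynomial.aeval lam) M.charpoly = 0) :
    ∃ v : Fin n → ℂ, v ≠ 0 ∧ (M.map (algebraMap ℝ ℂ)).mulVec v = lam • v := by
  set Mc : Matrix (Fin n) (Fin n) ℂ := M.map (algebraMap ℝ ℂ) with hMc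
  have h1 : Polynomial.eval lam Mc.charpoly = 0 := by
    rw [hMc, Matrix.charpoly_map, Polynomial.eval_map, ← Polynomial.aeval_def]
    exact h
  have h2 : (Matrix.scalar (Fin n) lam - Mc).det = 0 := by
    have e1 : Mc.charpoly = (Matrix.charmatrix Mc).det := rfl
    rw [e1, _root_.eval_det, Matrix.matPolyEquiv_charmatrix] at h1
    rwa [Polynomial.eval_sub, Polynomial.eval_X, Polynomial.eval_C] at h1
  obtain ⟨v, hv, hv2⟩ := Matrix.exists_mulVec_eq_zero_iff.mpr h2
  refine ⟨v, hv, ?_⟩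
  rw [Matrix.sub_mulVec] at hv2
  have h3 : (Matrix.scalar (Fin n) lam).mulVec v = lam • v := by
    have e2 : Matrix.scalar (Fin n) lam = lam • (1 : Matrix (Fin n) (Fin n) ℂ) := by
      rw [Matrix.scalar_apply, ← Matrix.smul_one_eq_diagonal]
    rw [e2, Matrix.smul_mulVec, Matrix.one_mulVec]
  rw [h3] at hv2
  exact (sub_eq_zero.mp hv2).symm

lemma perron_positive {n : ℕ} (hn : 1 ≤ n) (P : Matrix (Fin n) (Fin n) ℝ)
    (hP : ∀ i j, 0 < P i j) :
    ∃ r : ℝ, 0 < r ∧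
      (∀ t : ℝ, ∀ w : Fin n → ℝ, 0 ≤ t → (∀ i, 0 ≤ w i) → w ≠ 0 →
        (∀ i, t * w i ≤ P.mulVec w i) → t ≤ r) ∧
      ∃ Z : Fin n → ℝ, (∀ i, 0 < Z i) ∧ P.mulVec Z = r • Z ∧
        ∀ Y : Fin n → ℝ, P.mulVec Y = r • Y → ∃ c : ℝ, Y = c • Z := by
  haveI : Nonempty (Fin n) := ⟨⟨0, hn⟩⟩
  have hne : (Finset.univ : Finset (Fin n)).Nonempty := Finset.univ_nonempty
  have hn0 : (0:ℝ) < n := by exact_mod_cast hn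
  have hposmv : ∀ (w : Fin n → ℝ), (∀ j, 0 ≤ w j) → w ≠ 0 → ∀ i, 0 < P.mulVec w i := by
    intro w hw hw0 i
    obtain ⟨j, hj⟩ := Function.ne_iff.mp hw0
    have hj' : 0 < w j := lt_of_le_of_ne (hw j) (Ne.symm hj)
    have : P.mulVec w i = ∑ j, P i j * w j := by simp [Matrix.mulVec, dotProduct]
    rw [this]
    exact Finset.sum_pos' (fun l _ => mul_nonneg (hP i l).le (hw l))
      ⟨j, Finset.mem_univ j, mul_pos (hP i j) hj'⟩
  set S : ℝ := ∑ i, ∑ j, P i j with hS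
  set C : ℝ := S * n with hC
  have hbound : ∀ t (w : Fin n → ℝ), 0 ≤ t → (∀ i, 0 ≤ w i) → (∑ i, w i) = 1 →
      (∀ i, t * w i ≤ P.mulVec w i) → t ≤ C := by
    intro t w ht hw hsum hle
    have hwle1 : ∀ j, w j ≤ 1 := by
      intro j
      calc w j ≤ ∑ i, w i := Finset.single_le_sum (fun i _ => hw i) (Finset.mem_univ j)
        _ = 1 := hsum
    obtain ⟨i, hi⟩ : ∃ i, (1:ℝ)/n ≤ w i := by
      by_contra h
      push_neg at h
      have h2 : (∑ i, w i) < ∑ _i : Fin n, (1:ℝ)/n :=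
        Finset.sum_lt_sum_of_nonempty hne (fun i _ => h i)
      rw [hsum, Finset.sum_const, Finset.card_univ, Fintype.card_fin, nsmul_eq_mul,
        mul_one_div, div_self (ne_of_gt hn0)] at h2
      exact lt_irrefl _ h2
    have h1 : t * (1/n) ≤ t * w i := mul_le_mul_of_nonneg_left hi ht
    have h2 : P.mulVec w i ≤ S := by
      have hv : P.mulVec w i = ∑ j, P i j * w j := by simp [Matrix.mulVec, dotProduct]
      rw [hv]
      calc ∑ j, P i j * w j ≤ ∑ j, P i j := Finset.sum_le_sum fun j _ =>
            mul_le_of_le_one_right (hP i j).le (hwle1 j)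
        _ ≤ S := Finset.single_le_sum
            (fun l (_ : l ∈ Finset.univ) => Finset.sum_nonneg fun j _ => (hP l j).le)
            (Finset.mem_univ i)
    have h3 : t * (1/n) ≤ S := le_trans h1 (le_trans (hle i) h2)
    rw [mul_one_div, div_le_iff₀ hn0] at h3
    exact h3
  set K : Set (ℝ × (Fin n → ℝ)) :=
    {p | p.1 ∈ Set.Icc (0:ℝ) C ∧ (∀ i, 0 ≤ p.2 i) ∧ (∑ i, p.2 i) = 1 ∧
      ∀ i, p.1 * p.2 i ≤ P.mulVec p.2 i} with hKdef
  have hKclosed : IsClosed K := by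
    have e : K = (Prod.fst ⁻¹' Set.Icc (0:ℝ) C) ∩
        ((⋂ i, {p : ℝ × (Fin n → ℝ) | 0 ≤ p.2 i}) ∩
        (({p : ℝ × (Fin n → ℝ) | (∑ i, p.2 i) = 1}) ∩
        (⋂ i, {p : ℝ × (Fin n → ℝ) | p.1 * p.2 i ≤ P.mulVec p.2 i}))) := by
      ext p
      simp only [hKdef, Set.mem_setOf_eq, Set.mem_inter_iff, Set.mem_preimage, Set.mem_iInter,
        Set.mem_setOf_eq] <;> tauto
    rw [e]
    have c2 : ∀ i : Fin n, Continuous (fun p : ℝ × (Fin n → ℝ) => p.2 i) :=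
      fun i => (continuous_apply i).comp continuous_snd
    refine (isClosed_Icc.preimage continuous_fst).inter (IsClosed.inter ?_ (IsClosed.inter ?_ ?_))
    · exact isClosed_iInter fun i => isClosed_le continuous_const (c2 i)
    · exact isClosed_eq (continuous_finset_sum _ fun i _ => c2 i) continuous_const
    · refine isClosed_iInter fun i => isClosed_le (continuous_fst.mul (c2 i)) ?_
      have hfun : (fun p : ℝ × (Fin n → ℝ) => P.mulVec p.2 i) =
          fun p => ∑ j, P i j * p.2 j := by
        funext p; simp [Matrix.mulVec, dotProduct]
      rw [hfun]
      exact continuous_finset_sum _ fun j _ => continuous_const.mul (c2 j)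
  have hKcompact : IsCompact K := by
    refine IsCompact.of_isClosed_subset (isCompact_Icc
      (a := ((0:ℝ), (fun _ => 0 : Fin n → ℝ))) (b := (C, fun _ => 1))) hKclosed ?_
    rintro ⟨t, w⟩ ⟨ht, hw, hsum, _⟩
    constructor
    · exact ⟨ht.1, fun i => hw i⟩
    · refine ⟨ht.2, fun i => ?_⟩
      calc w i ≤ ∑ j, w j := Finset.single_le_sum (fun j _ => hw j) (Finset.mem_univ i)
        _ = 1 := hsum
  set w0 : Fin n → ℝ := fun _ => 1/n with hw0
  have hw0nn : ∀ i, 0 ≤ w0 i := fun i => by positivity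
  have hw0sum : (∑ i, w0 i) = 1 := by
    simp only [hw0, Finset.sum_const, Finset.card_univ, Fintype.card_fin, nsmul_eq_mul,
      mul_one_div]
    exact div_self (ne_of_gt hn0)
  have hw0ne : w0 ≠ 0 := by
    intro h
    have h1 : w0 ⟨0, hn⟩ = 0 := by rw [h]; rfl
    rw [hw0] at h1
    have h2 : (1:ℝ)/n ≠ 0 := by positivity
    exact h2 h1
  set t0 : ℝ := Finset.univ.inf' hne (fun i => P.mulVec w0 i) with ht0
  have ht0pos : 0 < t0 := by
    rw [ht0, Finset.lt_inf'_iff]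
    exact fun i _ => hposmv w0 hw0nn hw0ne i
  have ht0le : ∀ i, t0 * w0 i ≤ P.mulVec w0 i := by
    intro i
    calc t0 * w0 i ≤ t0 * 1 := by
          refine mul_le_mul_of_nonneg_left ?_ ht0pos.le
          rw [hw0]
          rw [div_le_one hn0]
          exact_mod_cast hn
      _ = t0 := mul_one t0
      _ ≤ P.mulVec w0 i := Finset.inf'_le _ (Finset.mem_univ i)
  have hmem0 : (t0, w0) ∈ K :=
    ⟨⟨ht0pos.le, hbound t0 w0 ht0pos.le hw0nn hw0sum ht0le⟩, hw0nn, hw0sum, ht0le⟩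
  obtain ⟨⟨r, Z⟩, hmem, hmax⟩ :=
    hKcompact.exists_isMaxOn ⟨(t0, w0), hmem0⟩ continuous_fst.continuousOn
  obtain ⟨⟨hr0, hrC⟩, hZnn, hZsum, hZle⟩ := hmem
  have hr : 0 < r := lt_of_lt_of_le ht0pos (hmax hmem0)
  have hZne : Z ≠ 0 := by
    intro h
    rw [h] at hZsum
    simp at hZsum
  have hCW : ∀ t (w : Fin n → ℝ), 0 ≤ t → (∀ i, 0 ≤ w i) → w ≠ 0 →
      (∀ i, t * w i ≤ P.mulVec w i) → t ≤ r := by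
    intro t w ht hw hwne hle
    set s : ℝ := ∑ i, w i with hs
    have hspos : 0 < s := by
      obtain ⟨j, hj⟩ := Function.ne_iff.mp hwne
      exact Finset.sum_pos' (fun i _ => hw i)
        ⟨j, Finset.mem_univ j, lt_of_le_of_ne (hw j) (Ne.symm hj)⟩
    set w' : Fin n → ℝ := s⁻¹ • w with hw'
    have hw'nn : ∀ i, 0 ≤ w' i := fun i => mul_nonneg (inv_nonneg.mpr hspos.le) (hw i)
    have hw'sum : (∑ i, w' i) = 1 := by
      simp only [hw', Pi.smul_apply, smul_eq_mul, ← Finset.mul_sum, ← hs]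
      exact inv_mul_cancel₀ (ne_of_gt hspos)
    have hw'le : ∀ i, t * w' i ≤ P.mulVec w' i := by
      intro i
      have hmv : P.mulVec w' i = s⁻¹ * P.mulVec w i := by
        rw [hw', Matrix.mulVec_smul]; simp
      rw [hmv, hw']
      simp only [Pi.smul_apply, smul_eq_mul]
      calc t * (s⁻¹ * w i) = s⁻¹ * (t * w i) := by ring
        _ ≤ s⁻¹ * P.mulVec w i :=
            mul_le_mul_of_nonneg_left (hle i) (inv_nonneg.mpr hspos.le)
    exact hmax (⟨⟨ht, hbound t w' ht hw'nn hw'sum hw'le⟩, hw'nn, hw'sum, hw'le⟩ :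
      (t, w') ∈ K)
  have heig : P.mulVec Z = r • Z := by
    by_contra hne'
    set u : Fin n → ℝ := P.mulVec Z - r • Z with hu
    have hunn : ∀ i, 0 ≤ u i := fun i => by
      simp only [hu, Pi.sub_apply, Pi.smul_apply, smul_eq_mul]
      linarith [hZle i]
    have hune : u ≠ 0 := by
      intro h
      rw [hu] at h
      exact hne' (sub_eq_zero.mp h)
    set w' : Fin n → ℝ := P.mulVec Z with hw'
    have hw'pos : ∀ i, 0 < w' i := hposmv Z hZnn hZne
    have hw'ne : w' ≠ 0 := by
      intro h
      have := congrFun h ⟨0, hn⟩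
      simp only [Pi.zero_apply] at this
      exact (ne_of_gt (hw'pos ⟨0, hn⟩)) this
    have hkey : ∀ i, 0 < P.mulVec w' i - r * w' i := by
      intro i
      have hPu := hposmv u hunn hune i
      have he : P.mulVec u i = P.mulVec w' i - r * w' i := by
        rw [hu, Matrix.mulVec_sub, Matrix.mulVec_smul, hw']
        simp
      rw [he] at hPu
      exact hPu
    set ε : ℝ := Finset.univ.inf' hne (fun i => (P.mulVec w' i - r * w' i) / w' i) with hε
    have hεpos : 0 < ε := by
      rw [hε, Finset.lt_inf'_iff]
      exact fun i _ => div_pos (hkey i) (hw'pos i)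
    have hεle : ∀ i, (r + ε) * w' i ≤ P.mulVec w' i := by
      intro i
      have h1 : ε ≤ (P.mulVec w' i - r * w' i) / w' i :=
        Finset.inf'_le _ (Finset.mem_univ i)
      rw [le_div_iff₀ (hw'pos i)] at h1
      nlinarith [hw'pos i]
    have := hCW (r + ε) w' (by linarith) (fun i => (hw'pos i).le) hw'ne hεle
    linarith
  have hZpos : ∀ i, 0 < Z i := by
    intro i
    have h1 : 0 < P.mulVec Z i := hposmv Z hZnn hZne i
    rw [heig] at h1
    simp only [Pi.smul_apply, smul_eq_mul] at h1
    rcases (hZnn i).lt_or_eq with h | h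
    · exact h
    · nlinarith
  refine ⟨r, hr, hCW, Z, hZpos, heig, ?_⟩
  intro Y hY
  set c : ℝ := Finset.univ.inf' hne (fun i => Y i / Z i) with hc
  obtain ⟨i0, _, hi0⟩ := Finset.exists_mem_eq_inf' hne (fun i => Y i / Z i)
  set W : Fin n → ℝ := Y - c • Z with hW
  have hWnn : ∀ i, 0 ≤ W i := by
    intro i
    have h1 : c ≤ Y i / Z i := Finset.inf'_le _ (Finset.mem_univ i)
    rw [le_div_iff₀ (hZpos i)] at h1
    simp only [hW, Pi.sub_apply, Pi.smul_apply, smul_eq_mul]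
    linarith
  have hWi0 : W i0 = 0 := by
    simp only [hW, Pi.sub_apply, Pi.smul_apply, smul_eq_mul]
    rw [hc, hi0, div_mul_cancel₀ _ (ne_of_gt (hZpos i0))]
    ring
  have hPW : P.mulVec W = r • W := by
    rw [hW, Matrix.mulVec_sub, Matrix.mulVec_smul, hY, heig, smul_sub, smul_smul, smul_smul,
      mul_comm]
  by_cases hWz : W = 0
  · refine ⟨c, ?_⟩
    rw [hW] at hWz
    exact sub_eq_zero.mp hWz
  · exfalso
    have h1 := hposmv W hWnn hWz i0
    rw [hPW] at h1
    simp only [Pi.smul_apply, smul_eq_mul, hWi0, mul_zero] at h1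
    exact lt_irrefl _ h1

end PerronAux




/-- **Perron–Frobenius for `J = B - D`** with `B` nonnegative irreducible and `D`
nonnegative diagonal: there is a real eigenvalue `λ0` of `J` dominating the real parts
of all complex eigenvalues of `J`, possessing a componentwise positive eigenvector `Z`
that is unique up to scalar multiples. -/
theorem stmt_0 {n : ℕ} (hn : 1 ≤ n)
    (B D : Matrix (Fin n) (Fin n) ℝ)
    (hBnn : ∀ i j, 0 ≤ B i j)
    (hBirr : ∀ i j, ∃ k : ℕ, 0 < k ∧ 0 < (B ^ k) i j)
    (hDdiag : D.IsDiag) (hDnn : ∀ i, 0 ≤ D i i) :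
    ∃ l0 : ℝ,
      (∀ lam : ℂ, (Polynomial.aeval lam) (B - D).charpoly = 0 → lam.re ≤ l0) ∧
      ∃ Z : Fin n → ℝ, (∀ i, 0 < Z i) ∧ (B - D).mulVec Z = l0 • Z ∧
        ∀ Y : Fin n → ℝ, (B - D).mulVec Y = l0 • Y → ∃ c : ℝ, Y = c • Z := by
  have i0 : Fin n := ⟨0, hn⟩
  set c : ℝ := ∑ i, D i i with hcdef
  have hcD : ∀ i, D i i ≤ c := fun i =>
    Finset.single_le_sum (fun j _ => hDnn j) (Finset.mem_univ i)
  set A : Matrix (Fin n) (Fin n) ℝ := (B - D) + c • 1 with hAdef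
  have hBA : ∀ i j, B i j ≤ A i j := by
    intro i j
    by_cases h : i = j
    · subst h
      simp only [hAdef, Matrix.add_apply, Matrix.sub_apply, Matrix.smul_apply,
        Matrix.one_apply_eq, smul_eq_mul, mul_one]
      linarith [hcD i]
    · simp only [hAdef, Matrix.add_apply, Matrix.sub_apply, Matrix.smul_apply,
        Matrix.one_apply_ne h, smul_eq_mul, mul_zero, hDdiag h]
      linarith
  have hAnn : ∀ i j, 0 ≤ A i j := fun i j => le_trans (hBnn i j) (hBA i j)
  -- the exponent
  set K : ℕ := Finset.univ.sup (fun p : Fin n × Fin n => (hBirr p.1 p.2).choose) with hKdef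
  have hkK : ∀ i j, (hBirr i j).choose ≤ K := fun i j =>
    Finset.le_sup (f := fun p : Fin n × Fin n => (hBirr p.1 p.2).choose)
      (Finset.mem_univ (i, j))
  have hK1 : 1 ≤ K := le_trans (hBirr i0 i0).choose_spec.1 (hkK i0 i0)
  set P : Matrix (Fin n) (Fin n) ℝ := (1 + A) ^ K with hPdef
  have hPpos : ∀ i j, 0 < P i j := by
    intro i j
    obtain ⟨hk0, hkpos⟩ := (hBirr i j).choose_spec
    calc (0:ℝ) < (B ^ (hBirr i j).choose) i j := hkpos
      _ ≤ (A ^ (hBirr i j).choose) i j := (pow_entry_le B A hBnn hBA _ i j).2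
      _ ≤ ((1 + A) ^ K) i j := (one_add_pow_entry A hAnn K).2 _ (hkK i j) i j
  obtain ⟨r, hr, hCW, Z, hZpos, hPZ, huniq⟩ := perron_positive hn P hPpos
  -- A preserves the eigenline of P
  have hcomm : Commute A P := ((Commute.one_right A).add_right (Commute.refl A)).pow_right K
  have h5 : P.mulVec (A.mulVec Z) = r • (A.mulVec Z) := by
    rw [Matrix.mulVec_mulVec, ← hcomm.eq, ← Matrix.mulVec_mulVec, hPZ, Matrix.mulVec_smul]
  obtain ⟨μ0, hAZ⟩ := huniq (A.mulVec Z) h5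
  have hμ0 : 0 ≤ μ0 := by
    have h6 := congrFun hAZ i0
    simp only [Pi.smul_apply, smul_eq_mul] at h6
    have h7 : 0 ≤ A.mulVec Z i0 := by
      have : A.mulVec Z i0 = ∑ j, A i0 j * Z j := by simp [Matrix.mulVec, dotProduct]
      rw [this]
      exact Finset.sum_nonneg fun j _ => mul_nonneg (hAnn i0 j) (hZpos j).le
    rw [h6] at h7
    by_contra h8
    push_neg at h8
    nlinarith [hZpos i0]
  have hr_eq : r = (1 + μ0) ^ K := by
    have h6 := onePlusPow_mulVec A Z μ0 hAZ K
    rw [← hPdef, hPZ] at h6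
    have h7 := congrFun h6 i0
    simp only [Pi.smul_apply, smul_eq_mul] at h7
    exact mul_right_cancel₀ (ne_of_gt (hZpos i0)) h7
  have h1μ : (0:ℝ) < 1 + μ0 := by linarith
  refine ⟨μ0 - c, ?_, Z, hZpos, ?_, ?_⟩
  · -- spectral bound
    intro lam hroot
    obtain ⟨v, hv, hv2⟩ := exists_eigenvector_of_root (B - D) lam hroot
    have hAc : A.map (algebraMap ℝ ℂ) =
        (B - D).map (algebraMap ℝ ℂ) + (c:ℂ) • 1 := by
      ext i j
      simp only [hAdef, Matrix.map_apply, Matrix.add_apply, Matrix.smul_apply,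
        Matrix.one_apply, smul_eq_mul, mul_ite, mul_one, mul_zero, apply_ite (algebraMap ℝ ℂ),
        map_add, map_zero]
      push_cast
      split <;> simp
    have hAcv : (A.map (algebraMap ℝ ℂ)).mulVec v = (lam + c) • v := by
      rw [hAc, Matrix.add_mulVec, hv2, Matrix.smul_mulVec, Matrix.one_mulVec, add_smul]
    have hPc : P.map (algebraMap ℝ ℂ) = (1 + A.map (algebraMap ℝ ℂ)) ^ K := by
      rw [hPdef, map_pow_ringHom]
      congr 1
      ext i j
      simp only [Matrix.map_apply, Matrix.add_apply, Matrix.one_apply, apply_ite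
        (algebraMap ℝ ℂ), map_add, map_zero]
      split <;> simp
    have hPcv : (P.map (algebraMap ℝ ℂ)).mulVec v = (1 + (lam + c)) ^ K • v := by
      rw [hPc]
      exact onePlusPow_mulVec _ v (lam + c) hAcv K
    set w : Fin n → ℝ := fun i => ‖v i‖ with hwdef
    have hwnn : ∀ i, 0 ≤ w i := fun i => norm_nonneg _
    have hwne : w ≠ 0 := by
      intro h
      apply hv
      funext j
      have := congrFun h j
      simp only [hwdef, Pi.zero_apply] at this
      exact norm_eq_zero.mp this
    set t : ℝ := ‖1 + (lam + c)‖ ^ K with htdef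
    have hle : ∀ i, t * w i ≤ P.mulVec w i := by
      intro i
      have hPcvi : (1 + (lam + c)) ^ K * v i = ∑ j, ((P i j : ℝ):ℂ) * v j := by
        have h8 := congrFun hPcv i
        simp only [Pi.smul_apply, smul_eq_mul] at h8
        rw [← h8]
        simp [Matrix.mulVec, dotProduct, Matrix.map_apply]
      calc t * w i = ‖(1 + (lam + c)) ^ K * v i‖ := by
            rw [norm_mul, norm_pow]
        _ = ‖∑ j, ((P i j : ℝ):ℂ) * v j‖ := by rw [hPcvi]
        _ ≤ ∑ j, ‖((P i j : ℝ):ℂ) * v j‖ := norm_sum_le _ _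
        _ = ∑ j, P i j * w j := by
            refine Finset.sum_congr rfl fun j _ => ?_
            rw [norm_mul, Complex.norm_real, Real.norm_eq_abs, abs_of_pos (hPpos i j)]
        _ = P.mulVec w i := by simp [Matrix.mulVec, dotProduct]
    have ht : 0 ≤ t := pow_nonneg (norm_nonneg _) K
    have htr : t ≤ r := hCW t w ht hwnn hwne hle
    rw [hr_eq] at htr
    have habs : ‖1 + (lam + c)‖ ≤ 1 + μ0 :=
      (pow_le_pow_iff_left₀ (norm_nonneg _) h1μ.le
        (by omega : K ≠ 0)).mp htr
    have hre : (1 + (lam + (c:ℂ))).re ≤ ‖1 + (lam + c)‖ :=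
      Complex.re_le_norm _
    simp only [Complex.add_re, Complex.one_re, Complex.ofReal_re] at hre
    linarith
  · -- Z is an eigenvector of B - D
    have hJA : B - D = A - c • 1 := by rw [hAdef, add_sub_cancel_right]
    rw [hJA, Matrix.sub_mulVec, hAZ, Matrix.smul_mulVec, Matrix.one_mulVec, ← sub_smul]
  · -- uniqueness
    intro Y hY
    have hAY : A.mulVec Y = μ0 • Y := by
      rw [hAdef, Matrix.add_mulVec, hY, Matrix.smul_mulVec, Matrix.one_mulVec,
        ← add_smul]
      congr 1
      ring
    have hPY : P.mulVec Y = r • Y := by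
      rw [hPdef, onePlusPow_mulVec A Y μ0 hAY K, hr_eq]
    exact huniq Y hPY
end

section
/- Let n ≥ 1, let M and G be nonnegative n×n real matrices with M ≠ 0, let D be a nonnegative diagonal n×n real matrix, and for β > 0 set J_β = β M + G − D. Assume that β M + G is irreducible for every β > 0. Suppose β* > 0 satisfies λ_max(J_{β*}) = 0. Then for every β with 0 < β < β*, one has λ_max(J_β) < 0. -/
open Matrix Filter Polynomial Topology

attribute [local instance] Matrix.linftyOpNormedRing Matrix.linftyOpNormedAlgebra

variable {n : ℕ}

lemma mulVec_entry_nonneg (A : Matrix (Fin n) (Fin n) ℝ) (hA : ∀ i j, 0 ≤ A i j)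
    (x : Fin n → ℝ) (hx : ∀ i, 0 ≤ x i) (i : Fin n) : 0 ≤ (A *ᵥ x) i := by
  simpa [Matrix.mulVec, dotProduct] using Finset.sum_nonneg fun j (_ : j ∈ Finset.univ) => mul_nonneg (hA i j) (hx j)

lemma mulVec_entry_mono (A : Matrix (Fin n) (Fin n) ℝ) (hA : ∀ i j, 0 ≤ A i j)
    (x y : Fin n → ℝ) (hxy : ∀ i, x i ≤ y i) (i : Fin n) : (A *ᵥ x) i ≤ (A *ᵥ y) i := by
  simpa [Matrix.mulVec, dotProduct] using Finset.sum_le_sum fun j (_ : j ∈ Finset.univ) => mul_le_mul_of_nonneg_left (hxy j) (hA i j)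

lemma pow_entry_nonneg (A : Matrix (Fin n) (Fin n) ℝ) (hA : ∀ i j, 0 ≤ A i j) :
    ∀ k i j, 0 ≤ (A ^ k) i j := by
  intro k
  induction k with
  | zero => intro i j; simp [Matrix.one_apply]; split <;> norm_num
  | succ k ih =>
    intro i j
    rw [pow_succ, Matrix.mul_apply]
    exact Finset.sum_nonneg fun l _ => mul_nonneg (ih i l) (hA l j)

lemma pow_entry_mono (A B : Matrix (Fin n) (Fin n) ℝ) (hA : ∀ i j, 0 ≤ A i j)
    (hAB : ∀ i j, A i j ≤ B i j) : ∀ k i j, (A ^ k) i j ≤ (B ^ k) i j := by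
  intro k
  induction k with
  | zero => simp
  | succ k ih =>
    intro i j
    rw [pow_succ, pow_succ, Matrix.mul_apply, Matrix.mul_apply]
    refine Finset.sum_le_sum fun l _ => mul_le_mul (ih i l) (hAB l j) (hA l j)
      (le_trans (pow_entry_nonneg A hA k i l) (ih i l))
variable {n : ℕ}

lemma mulVec_apply' (A : Matrix (Fin n) (Fin n) ℝ) (x : Fin n → ℝ) (i : Fin n) :
    (A *ᵥ x) i = ∑ j, A i j * x j := rfl

-- entries of (1+A)^m dominate entries of A^k for k ≤ m, when A ≥ 0
lemma one_add_pow_entry_ge (A : Matrix (Fin n) (Fin n) ℝ) (hA : ∀ i j, 0 ≤ A i j) :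
    ∀ m k, k ≤ m → ∀ i j, (A ^ k) i j ≤ ((1 + A) ^ m) i j := by
  have h1A : ∀ i j, 0 ≤ (1 + A) i j := by
    intro i j
    simp only [Matrix.add_apply, Matrix.one_apply]
    split <;> [linarith [hA i j]; simpa using hA i j]
  intro m
  induction m with
  | zero => intro k hk i j; interval_cases k; simp
  | succ m ih =>
    intro k hk i j
    have hpow : ((1 + A) ^ (m+1)) i j = ((1+A)^m) i j + ((1+A)^m * A) i j := by
      rw [pow_succ, mul_add, mul_one]
      simp [Matrix.add_apply]
    rw [hpow]
    have hnn : 0 ≤ ((1+A)^m * A) i j := by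
      rw [Matrix.mul_apply]
      exact Finset.sum_nonneg fun l _ =>
        mul_nonneg (pow_entry_nonneg _ h1A m i l) (hA l j)
    have hnn2 : 0 ≤ ((1+A)^m) i j := pow_entry_nonneg _ h1A m i j
    rcases Nat.lt_or_ge k (m+1) with hk' | hk'
    · have := ih k (Nat.lt_succ_iff.mp hk') i j
      linarith
    · have hkm : k = m + 1 := le_antisymm hk hk'
      subst hkm
      have : (A ^ (m+1)) i j ≤ ((1+A)^m * A) i j := by
        rw [pow_succ, Matrix.mul_apply, Matrix.mul_apply]
        exact Finset.sum_le_sum fun l _ =>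
          mul_le_mul_of_nonneg_right (ih m le_rfl i l) (hA l j)
      linarith

lemma exists_pos_one_add_pow (A : Matrix (Fin n) (Fin n) ℝ) (hA : ∀ i j, 0 ≤ A i j)
    (hirr : ∀ i j, ∃ k : ℕ, 0 < k ∧ 0 < (A ^ k) i j) :
    ∃ m : ℕ, ∀ i j, 0 < ((1 + A) ^ m) i j := by
  choose k hk1 hk2 using hirr
  refine ⟨Finset.univ.sup (fun p : Fin n × Fin n => k p.1 p.2), fun i j => ?_⟩
  have hle : k i j ≤ Finset.univ.sup (fun p : Fin n × Fin n => k p.1 p.2) :=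
    Finset.le_sup (f := fun p : Fin n × Fin n => k p.1 p.2) (Finset.mem_univ (i, j))
  exact lt_of_lt_of_le (hk2 i j) (one_add_pow_entry_ge A hA _ _ hle i j)

lemma pos_mulVec_pos (Q : Matrix (Fin n) (Fin n) ℝ) (hQ : ∀ i j, 0 < Q i j)
    (x : Fin n → ℝ) (hx : ∀ i, 0 ≤ x i) (hxne : x ≠ 0) (i : Fin n) : 0 < (Q *ᵥ x) i := by
  obtain ⟨j0, hj0⟩ : ∃ j0, x j0 ≠ 0 := Function.ne_iff.mp hxne
  have hj0' : 0 < x j0 := lt_of_le_of_ne (hx j0) (Ne.symm hj0)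
  rw [mulVec_apply']
  exact Finset.sum_pos' (fun j _ => mul_nonneg (hQ i j).le (hx j))
    ⟨j0, Finset.mem_univ _, mul_pos (hQ i j0) hj0'⟩

lemma iter_mulVec_ge (A : Matrix (Fin n) (Fin n) ℝ) (hA : ∀ i j, 0 ≤ A i j)
    (W : Fin n → ℝ) (hW : ∀ i, 0 ≤ W i) (s : ℝ) (hs : 0 ≤ s)
    (hAW : ∀ i, s * W i ≤ (A *ᵥ W) i) :
    ∀ k i, s ^ k * W i ≤ ((A ^ k) *ᵥ W) i := by
  intro k
  induction k with
  | zero => intro i; simp [Matrix.one_mulVec]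
  | succ k ih =>
    intro i
    have h1 : ((A ^ (k+1)) *ᵥ W) i = ((A ^ k) *ᵥ (A *ᵥ W)) i := by
      rw [Matrix.mulVec_mulVec, ← pow_succ]
    rw [h1]
    have h2 : ((A ^ k) *ᵥ (s • W)) i ≤ ((A ^ k) *ᵥ (A *ᵥ W)) i :=
      mulVec_entry_mono _ (pow_entry_nonneg A hA k) _ _ (fun j => by simpa using hAW j) i
    have h3 : ((A ^ k) *ᵥ (s • W)) i = s * ((A ^ k) *ᵥ W) i := by
      rw [Matrix.mulVec_smul]; simp
    calc s ^ (k+1) * W i = s * (s ^ k * W i) := by ring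
    _ ≤ s * (((A ^ k) *ᵥ W) i) := by
        exact mul_le_mul_of_nonneg_left (ih i) hs
    _ = ((A ^ k) *ᵥ (s • W)) i := h3.symm
    _ ≤ _ := h2
variable {n : ℕ}

lemma charpoly_eval_eq_det {K : Type*} [Field K] (B : Matrix (Fin n) (Fin n) K) (t : K) :
    B.charpoly.eval t = (t • (1 : Matrix (Fin n) (Fin n) K) - B).det := by
  rw [Matrix.charpoly, eval_det, Matrix.matPolyEquiv_charmatrix]
  congr 1
  rw [Polynomial.eval_sub, Polynomial.eval_X, Polynomial.eval_C]
  congr 1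
  rw [Matrix.scalar_apply]
  ext i j
  by_cases h : i = j <;> simp [h, Matrix.smul_apply, Matrix.one_apply, Matrix.diagonal_apply]

lemma mem_spectrum_iff_charpoly {K : Type*} [Field K] (B : Matrix (Fin n) (Fin n) K) (z : K) :
    z ∈ spectrum K B ↔ B.charpoly.eval z = 0 := by
  rw [spectrum.mem_iff, charpoly_eval_eq_det, Algebra.algebraMap_eq_smul_one,
    Matrix.isUnit_iff_isUnit_det, isUnit_iff_ne_zero, not_not]

lemma det_exists_eigenvector {K : Type*} [Field K] [DecidableEq K] (B : Matrix (Fin n) (Fin n) K) (z : K)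
    (h : (z • (1 : Matrix (Fin n) (Fin n) K) - B).det = 0) :
    ∃ v : Fin n → K, v ≠ 0 ∧ B *ᵥ v = z • v := by
  obtain ⟨v, hv0, hv⟩ := (Matrix.exists_mulVec_eq_zero_iff).mpr h
  refine ⟨v, hv0, ?_⟩
  rw [Matrix.sub_mulVec, Matrix.smul_mulVec, Matrix.one_mulVec, sub_eq_zero] at hv
  exact hv.symm

lemma real_eigen_aeval_zero (J : Matrix (Fin n) (Fin n) ℝ) (t : ℝ)
    (V : Fin n → ℝ) (hV : V ≠ 0) (hJV : J *ᵥ V = t • V) :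
    (Polynomial.aeval (t : ℂ)) J.charpoly = 0 := by
  have hdet : (t • (1 : Matrix (Fin n) (Fin n) ℝ) - J).det = 0 := by
    rw [← Matrix.exists_mulVec_eq_zero_iff]
    exact ⟨V, hV, by rw [Matrix.sub_mulVec, Matrix.smul_mulVec, Matrix.one_mulVec, hJV]; simp⟩
  have heval : J.charpoly.eval t = 0 := by rw [charpoly_eval_eq_det]; exact hdet
  have : (Polynomial.aeval ((algebraMap ℝ ℂ) t)) J.charpoly = (algebraMap ℝ ℂ) (J.charpoly.eval t) := by
    rw [Polynomial.aeval_algebraMap_apply]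
    simp
  simpa [heval] using this

lemma cw_le_spectralRadius (A : Matrix (Fin n) (Fin n) ℝ)
    (hA : ∀ i j, 0 ≤ A i j) (W : Fin n → ℝ) (hW : ∀ i, 0 ≤ W i)
    (j0 : Fin n) (hj0 : 0 < W j0) (s : ℝ) (hs : 0 ≤ s)
    (hAW : ∀ i, s * W i ≤ (A *ᵥ W) i) :
    ENNReal.ofReal s ≤ spectralRadius ℂ (A.map (algebraMap ℝ ℂ)) := by
  haveI : CompleteSpace (Matrix (Fin n) (Fin n) ℂ) := FiniteDimensional.complete ℂ _
  rcases hs.eq_or_lt with rfl | hs'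
  · simp
  set 𝒜 : Matrix (Fin n) (Fin n) ℂ := A.map (algebraMap ℝ ℂ) with h𝒜
  set Wc : Fin n → ℂ := fun i => ((W i : ℝ) : ℂ) with hWc
  have hWcne : Wc ≠ 0 := by
    intro h
    have := congrFun h j0
    simp [hWc] at this
    exact hj0.ne' this
  have hWcpos : 0 < ‖Wc‖ := norm_pos_iff.mpr hWcne
  set c : ℝ := W j0 / ‖Wc‖ with hc
  have hcpos : 0 < c := div_pos hj0 hWcpos
  -- key norm bound
  have hkey : ∀ k : ℕ, s ^ k * c ≤ ‖𝒜 ^ k‖ := by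
    intro k
    have h1 : s ^ k * W j0 ≤ ((A ^ k) *ᵥ W) j0 := iter_mulVec_ge A hA W hW s hs hAW k j0
    have hmap : 𝒜 ^ k = (A ^ k).map (algebraMap ℝ ℂ) := by
      rw [h𝒜, ← RingHom.mapMatrix_apply, ← RingHom.mapMatrix_apply, map_pow]
    have hentry : ((𝒜 ^ k) *ᵥ Wc) j0 = (((A ^ k) *ᵥ W) j0 : ℝ) := by
      rw [hmap, hWc]
      exact (RingHom.map_mulVec (algebraMap ℝ ℂ) (A ^ k) W j0).symm
    have h2 : ((A ^ k) *ᵥ W) j0 ≤ ‖((𝒜 ^ k) *ᵥ Wc) j0‖ := by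
      rw [hentry, Complex.norm_real]
      exact le_abs_self _
    have h3 : ‖((𝒜 ^ k) *ᵥ Wc) j0‖ ≤ ‖(𝒜 ^ k) *ᵥ Wc‖ := norm_le_pi_norm _ j0
    have h4 : ‖(𝒜 ^ k) *ᵥ Wc‖ ≤ ‖𝒜 ^ k‖ * ‖Wc‖ := Matrix.linfty_opNorm_mulVec _ _
    have h5 : s ^ k * W j0 ≤ ‖𝒜 ^ k‖ * ‖Wc‖ := by linarith
    rw [hc, ← mul_div_assoc, div_le_iff₀ hWcpos]
    exact h5
  -- limit argument
  have hgel := spectrum.pow_nnnorm_pow_one_div_tendsto_nhds_spectralRadius 𝒜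
  have hreal : Tendsto (fun k : ℕ => s * c ^ (1 / (k : ℝ))) atTop (𝓝 s) := by
    have h1 : Tendsto (fun k : ℕ => (1 / (k : ℝ))) atTop (𝓝 0) :=
      tendsto_one_div_atTop_nhds_zero_nat
    have h2 : ContinuousAt (fun x : ℝ => c ^ x) 0 := Real.continuousAt_const_rpow hcpos.ne'
    have h3 : Tendsto (fun k : ℕ => c ^ (1 / (k : ℝ))) atTop (𝓝 (c ^ (0:ℝ))) :=
      (h2.tendsto).comp h1
    rw [Real.rpow_zero] at h3
    simpa using h3.const_mul s
  have hg : Tendsto (fun k : ℕ => ENNReal.ofReal (s * c ^ (1 / (k : ℝ)))) atTop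
      (𝓝 (ENNReal.ofReal s)) := (ENNReal.continuous_ofReal.tendsto s).comp hreal
  refine le_of_tendsto_of_tendsto hg hgel ?_
  filter_upwards [eventually_ge_atTop 1] with k hk
  have hk0 : (k : ℝ) ≠ 0 := Nat.cast_ne_zero.mpr (by omega)
  have hrpow_nonneg : (0:ℝ) ≤ 1 / (k : ℝ) := by positivity
  have hid : s * c ^ (1 / (k : ℝ)) = (s ^ k * c) ^ (1 / (k : ℝ)) := by
    rw [Real.mul_rpow (pow_nonneg hs k) hcpos.le]
    congr 1
    rw [← Real.rpow_natCast s k, ← Real.rpow_mul hs]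
    rw [mul_one_div_cancel hk0, Real.rpow_one]
  have hb : (0:ℝ) ≤ s ^ k * c := mul_nonneg (pow_nonneg hs k) hcpos.le
  calc ENNReal.ofReal (s * c ^ (1 / (k : ℝ)))
      = ENNReal.ofReal ((s ^ k * c) ^ (1 / (k : ℝ))) := by rw [hid]
    _ ≤ ENNReal.ofReal (‖𝒜 ^ k‖ ^ (1 / (k : ℝ))) := by
        apply ENNReal.ofReal_le_ofReal
        exact Real.rpow_le_rpow hb (hkey k) hrpow_nonneg
    _ = (‖𝒜 ^ k‖₊ : ENNReal) ^ (1 / (k : ℝ)) := by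
        rw [← ENNReal.ofReal_rpow_of_nonneg (norm_nonneg _) hrpow_nonneg,
          ofReal_norm, enorm_eq_nnnorm]

lemma pf_exists_real_eigen (hn : 1 ≤ n) (A : Matrix (Fin n) (Fin n) ℝ)
    (hA : ∀ i j, 0 ≤ A i j)
    (hirr : ∀ i j, ∃ k : ℕ, 0 < k ∧ 0 < (A ^ k) i j)
    (W : Fin n → ℝ) (hW : ∀ i, 0 ≤ W i) (hWne : W ≠ 0)
    (s : ℝ) (hs : 0 ≤ s) (hAW : ∀ i, s * W i ≤ (A *ᵥ W) i) :
    ∃ t : ℝ, s ≤ t ∧ ∃ V : Fin n → ℝ, V ≠ 0 ∧ A *ᵥ V = t • V := by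
  haveI : NeZero n := ⟨by omega⟩
  haveI : Nonempty (Fin n) := ⟨⟨0, by omega⟩⟩
  haveI : CompleteSpace (Matrix (Fin n) (Fin n) ℂ) := FiniteDimensional.complete ℂ _
  set 𝒜 : Matrix (Fin n) (Fin n) ℂ := A.map (algebraMap ℝ ℂ) with h𝒜
  obtain ⟨j0, hj0ne⟩ : ∃ j0, W j0 ≠ 0 := Function.ne_iff.mp hWne
  have hj0 : 0 < W j0 := lt_of_le_of_ne (hW j0) (Ne.symm hj0ne)
  have hcw := cw_le_spectralRadius A hA W hW j0 hj0 s hs hAW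
  obtain ⟨z, hz, hznorm⟩ := spectrum.exists_nnnorm_eq_spectralRadius (a := 𝒜)
  set ρ : ℝ := ‖z‖ with hρ
  have hρ0 : 0 ≤ ρ := norm_nonneg z
  have hsr : ENNReal.ofReal s ≤ ENNReal.ofReal ρ := by
    rw [hρ, ofReal_norm, enorm_eq_nnnorm, hznorm]; exact hcw
  have hsρ : s ≤ ρ := by
    rwa [ENNReal.ofReal_le_ofReal_iff hρ0] at hsr
  -- eigenvector for z
  have hdet : (z • (1 : Matrix (Fin n) (Fin n) ℂ) - 𝒜).det = 0 := by
    have := (mem_spectrum_iff_charpoly 𝒜 z).mp hz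
    rwa [charpoly_eval_eq_det] at this
  obtain ⟨v, hv0, hv⟩ := det_exists_eigenvector 𝒜 z hdet
  set W₁ : Fin n → ℝ := fun i => ‖v i‖ with hW₁
  have hW₁nn : ∀ i, 0 ≤ W₁ i := fun i => norm_nonneg _
  have hW₁ne : W₁ ≠ 0 := by
    obtain ⟨j, hj⟩ := Function.ne_iff.mp hv0
    intro h
    exact hj (norm_eq_zero.mp (congrFun h j))
  have hAW₁ : ∀ i, ρ * W₁ i ≤ (A *ᵥ W₁) i := by
    intro i
    have h1 : ρ * W₁ i = ‖(𝒜 *ᵥ v) i‖ := by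
      rw [hv]; simp [hW₁, hρ, norm_smul]
    have h2 : (𝒜 *ᵥ v) i = ∑ j, 𝒜 i j * v j := rfl
    have h3 : ‖(𝒜 *ᵥ v) i‖ ≤ ∑ j, ‖𝒜 i j * v j‖ := by
      rw [h2]; exact norm_sum_le _ _
    have h4 : ∀ j, ‖𝒜 i j * v j‖ = A i j * W₁ j := by
      intro j
      rw [norm_mul, hW₁]
      congr 1
      simp [h𝒜, Complex.norm_real, abs_of_nonneg (hA i j)]
    have h5 : (A *ᵥ W₁) i = ∑ j, A i j * W₁ j := rfl
    rw [h1, h5]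
    refine h3.trans (le_of_eq ?_)
    exact Finset.sum_congr rfl fun j _ => h4 j
  by_cases heq : A *ᵥ W₁ = ρ • W₁
  · exact ⟨ρ, hsρ, W₁, hW₁ne, heq⟩
  · exfalso
    obtain ⟨m, hQpos⟩ := exists_pos_one_add_pow A hA hirr
    set Q : Matrix (Fin n) (Fin n) ℝ := (1 + A) ^ m with hQ
    set u : Fin n → ℝ := A *ᵥ W₁ - ρ • W₁ with hu
    have hunn : ∀ i, 0 ≤ u i := fun i => by
      simp only [hu, Pi.sub_apply, Pi.smul_apply, smul_eq_mul, sub_nonneg]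
      exact hAW₁ i
    have hune : u ≠ 0 := sub_ne_zero.mpr heq
    set W₂ := Q *ᵥ W₁ with hW₂
    set u₂ := Q *ᵥ u with hu₂
    have hW₂pos : ∀ i, 0 < W₂ i := pos_mulVec_pos Q hQpos W₁ hW₁nn hW₁ne
    have hu₂pos : ∀ i, 0 < u₂ i := pos_mulVec_pos Q hQpos u hunn hune
    have hcomm : A * Q = Q * A := by
      have : Commute A Q := ((Commute.one_right A).add_right (Commute.refl A)).pow_right m
      exact this
    have hAW₂eq : A *ᵥ W₂ = ρ • W₂ + u₂ := by
      have e1 : A *ᵥ W₂ = Q *ᵥ (A *ᵥ W₁) := by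
        rw [hW₂, Matrix.mulVec_mulVec, Matrix.mulVec_mulVec, hcomm]
      have e2 : A *ᵥ W₁ = ρ • W₁ + u := by rw [hu]; abel
      rw [e1, e2, Matrix.mulVec_add, Matrix.mulVec_smul]
    have hne : (Finset.univ : Finset (Fin n)).Nonempty := Finset.univ_nonempty
    set ε : ℝ := Finset.univ.inf' hne (fun i => u₂ i / W₂ i) with hε
    have hεpos : 0 < ε := by
      rw [hε, Finset.lt_inf'_iff]
      exact fun i _ => div_pos (hu₂pos i) (hW₂pos i)
    have hAW₂ : ∀ i, (ρ + ε) * W₂ i ≤ (A *ᵥ W₂) i := by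
      intro i
      have h1 : ε ≤ u₂ i / W₂ i := Finset.inf'_le _ (Finset.mem_univ i)
      have h2 : ε * W₂ i ≤ u₂ i := by
        rw [← div_mul_cancel₀ (u₂ i) (hW₂pos i).ne']
        exact mul_le_mul_of_nonneg_right h1 (hW₂pos i).le
      have h3 : (A *ᵥ W₂) i = ρ * W₂ i + u₂ i := by
        rw [hAW₂eq]; simp
      rw [h3]; nlinarith
    have hcw2 := cw_le_spectralRadius A hA W₂ (fun i => (hW₂pos i).le)
      (Classical.arbitrary (Fin n)) (hW₂pos _) (ρ + ε) (by linarith) hAW₂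
    rw [hznorm.symm, ← enorm_eq_nnnorm, ← ofReal_norm] at hcw2
    have : ρ + ε ≤ ρ := by
      rwa [ENNReal.ofReal_le_ofReal_iff hρ0] at hcw2
    linarith

/-- `l0` is the dominant (Perron–Frobenius) eigenvalue of the real matrix `J`:
it is a real eigenvalue of `J` and every complex eigenvalue `lam` of `J`
(i.e. root of the characteristic polynomial over `ℂ`) satisfies `lam.re ≤ l0`. -/
def IsLamMax {n : ℕ} (J : Matrix (Fin n) (Fin n) ℝ) (l0 : ℝ) : Prop :=
  (∃ Z : Fin n → ℝ, Z ≠ 0 ∧ J.mulVec Z = l0 • Z) ∧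
  ∀ lam : ℂ, (Polynomial.aeval lam) J.charpoly = 0 → lam.re ≤ l0

/-- For `J_β = β M + G - D` with `M, G` nonnegative, `M ≠ 0`, `D` nonnegative diagonal
and `β M + G` irreducible for every `β > 0`: if `λ_max(J_{β*}) = 0` for some `β* > 0`,
then `λ_max(J_β) < 0` for every `0 < β < β*`. -/
theorem stmt_6 {n : ℕ} (hn : 1 ≤ n)
    (M G D : Matrix (Fin n) (Fin n) ℝ)
    (hMnn : ∀ i j, 0 ≤ M i j) (hGnn : ∀ i j, 0 ≤ G i j) (hMne : M ≠ 0)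
    (hDdiag : D.IsDiag) (hDnn : ∀ i, 0 ≤ D i i)
    (hirr : ∀ β : ℝ, 0 < β → ∀ i j, ∃ k : ℕ, 0 < k ∧ 0 < ((β • M + G) ^ k) i j)
    (βstar : ℝ) (hβstar : 0 < βstar)
    (hcrit : IsLamMax (βstar • M + G - D) 0) :
    ∀ β : ℝ, 0 < β → β < βstar →
      ∀ l : ℝ, IsLamMax (β • M + G - D) l → l < 0 := by
  intro β hβ hββ l hl
  by_contra hlneg
  push_neg at hlneg  -- hlneg : 0 ≤ l
  haveI : NeZero n := ⟨by omega⟩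
  haveI : Nonempty (Fin n) := ⟨⟨0, by omega⟩⟩
  set c : ℝ := 1 + ∑ i, D i i with hc
  have hcpos : 0 < c := by
    have : 0 ≤ ∑ i, D i i := Finset.sum_nonneg fun i _ => hDnn i
    rw [hc]; linarith
  have hDc : ∀ i, D i i ≤ c - 1 := by
    intro i
    have := Finset.single_le_sum (f := fun i => D i i) (fun j _ => hDnn j) (Finset.mem_univ i)
    rw [hc]; linarith
  set E : Matrix (Fin n) (Fin n) ℝ := c • (1 : Matrix (Fin n) (Fin n) ℝ) - D with hE
  have hEnn : ∀ i j, 0 ≤ E i j := by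
    intro i j
    rw [hE]
    by_cases h : i = j
    · subst h
      simp only [Matrix.sub_apply, Matrix.smul_apply, Matrix.one_apply_eq, smul_eq_mul, mul_one]
      have := hDc i; linarith
    · simp only [Matrix.sub_apply, Matrix.smul_apply, Matrix.one_apply_ne h, smul_eq_mul,
        mul_zero, hDdiag h, sub_zero, le_refl]
  -- basic entrywise facts
  have hBG : ∀ (b : ℝ), 0 < b → ∀ i j, 0 ≤ (b • M + G) i j := by
    intro b hb i j
    simp only [Matrix.add_apply, Matrix.smul_apply, smul_eq_mul]
    have := hMnn i j; have := hGnn i j; nlinarith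
  set Aβ : Matrix (Fin n) (Fin n) ℝ := (β • M + G) + E with hAβ
  set Astar : Matrix (Fin n) (Fin n) ℝ := (βstar • M + G) + E with hAstar
  have hAβnn : ∀ i j, 0 ≤ Aβ i j := fun i j => by
    rw [hAβ]; simp only [Matrix.add_apply]
    exact add_nonneg (hBG β hβ i j) (hEnn i j)
  have hAstarnn : ∀ i j, 0 ≤ Astar i j := fun i j => by
    rw [hAstar]; simp only [Matrix.add_apply]
    exact add_nonneg (hBG βstar hβstar i j) (hEnn i j)
  have hirrtrans : ∀ (b : ℝ), 0 < b → ∀ (A : Matrix (Fin n) (Fin n) ℝ),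
      A = (b • M + G) + E → ∀ i j, ∃ k : ℕ, 0 < k ∧ 0 < (A ^ k) i j := by
    intro b hb A hAeq i j
    obtain ⟨k, hk, hpos⟩ := hirr b hb i j
    refine ⟨k, hk, lt_of_lt_of_le hpos ?_⟩
    apply pow_entry_mono (b • M + G) A (hBG b hb) _ k i j
    intro i' j'
    rw [hAeq]
    simp only [Matrix.add_apply]
    have := hEnn i' j'; linarith
  have hirrβ := hirrtrans β hβ Aβ rfl
  have hirrstar := hirrtrans βstar hβstar Astar rfl
  -- eigenvector of J_β
  obtain ⟨V, hVne, hVeig⟩ := hl.1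
  set W : Fin n → ℝ := fun i => |V i| with hW
  have hWnn : ∀ i, 0 ≤ W i := fun i => abs_nonneg _
  have hWne : W ≠ 0 := by
    obtain ⟨j, hj⟩ := Function.ne_iff.mp hVne
    intro h
    exact hj (abs_eq_zero.mp (congrFun h j))
  -- Aβ as J_β + c • 1
  have hAβJ : ∀ x : Fin n → ℝ, Aβ *ᵥ x = (β • M + G - D) *ᵥ x + c • x := by
    intro x
    have : Aβ = (β • M + G - D) + c • (1 : Matrix (Fin n) (Fin n) ℝ) := by
      rw [hAβ, hE]; abel
    rw [this, Matrix.add_mulVec, Matrix.smul_mulVec, Matrix.one_mulVec]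
  have hAstarJ : ∀ x : Fin n → ℝ, Astar *ᵥ x = (βstar • M + G - D) *ᵥ x + c • x := by
    intro x
    have : Astar = (βstar • M + G - D) + c • (1 : Matrix (Fin n) (Fin n) ℝ) := by
      rw [hAstar, hE]; abel
    rw [this, Matrix.add_mulVec, Matrix.smul_mulVec, Matrix.one_mulVec]
  have hAβV : Aβ *ᵥ V = (l + c) • V := by
    rw [hAβJ, hVeig]
    ext i; simp [add_smul]; ring
  have hlc : 0 ≤ l + c := by linarith
  -- triangle inequality : Aβ W ≥ (l+c) W entrywise
  have hAβW : ∀ i, (l + c) * W i ≤ (Aβ *ᵥ W) i := by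
    intro i
    have h1 : (l + c) * W i = |((Aβ *ᵥ V) i)| := by
      rw [hAβV, hW]
      simp only [Pi.smul_apply, smul_eq_mul, abs_mul, abs_of_nonneg hlc]
    have h2 : |((Aβ *ᵥ V) i)| ≤ ∑ j, Aβ i j * W j := by
      have e : (Aβ *ᵥ V) i = ∑ j, Aβ i j * V j := rfl
      rw [e]
      refine (Finset.abs_sum_le_sum_abs _ _).trans (le_of_eq ?_)
      refine Finset.sum_congr rfl fun j _ => ?_
      rw [abs_mul, abs_of_nonneg (hAβnn i j), hW]
    have h3 : (Aβ *ᵥ W) i = ∑ j, Aβ i j * W j := rfl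
    rw [h1, h3]; exact h2
  -- positivize W with respect to Aβ
  obtain ⟨m₁, hQ₁pos⟩ := exists_pos_one_add_pow Aβ hAβnn hirrβ
  set Q₁ : Matrix (Fin n) (Fin n) ℝ := (1 + Aβ) ^ m₁ with hQ₁def
  have hQ₁nn : ∀ i j, 0 ≤ Q₁ i j := fun i j => (hQ₁pos i j).le
  set W₁ := Q₁ *ᵥ W with hW₁def
  have hW₁pos : ∀ i, 0 < W₁ i := pos_mulVec_pos Q₁ hQ₁pos W hWnn hWne
  have hcomm₁ : Aβ * Q₁ = Q₁ * Aβ := by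
    have : Commute Aβ Q₁ := ((Commute.one_right Aβ).add_right (Commute.refl Aβ)).pow_right m₁
    exact this
  have hAβW₁ : ∀ i, (l + c) * W₁ i ≤ (Aβ *ᵥ W₁) i := by
    intro i
    have e1 : Aβ *ᵥ W₁ = Q₁ *ᵥ (Aβ *ᵥ W) := by
      rw [hW₁def, Matrix.mulVec_mulVec, Matrix.mulVec_mulVec, hcomm₁]
    have e2 : (Q₁ *ᵥ ((l + c) • W)) i ≤ (Q₁ *ᵥ (Aβ *ᵥ W)) i :=
      mulVec_entry_mono Q₁ hQ₁nn _ _ (fun j => by simpa using hAβW j) i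
    have e3 : (Q₁ *ᵥ ((l + c) • W)) i = (l + c) * W₁ i := by
      rw [Matrix.mulVec_smul, hW₁def]; simp
    rw [e1, ← e3]; exact e2
  -- M *ᵥ W₁ is nonzero and nonneg
  have hMW₁nn : ∀ i, 0 ≤ (M *ᵥ W₁) i :=
    mulVec_entry_nonneg M hMnn W₁ (fun i => (hW₁pos i).le)
  obtain ⟨i0, hi0⟩ := Function.ne_iff.mp hMne
  obtain ⟨j0, hj0⟩ := Function.ne_iff.mp hi0
  have hMij : 0 < M i0 j0 := lt_of_le_of_ne (hMnn i0 j0) (Ne.symm hj0)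
  have hMW₁pos : 0 < (M *ᵥ W₁) i0 := by
    have e : (M *ᵥ W₁) i0 = ∑ j, M i0 j * W₁ j := rfl
    rw [e]
    exact Finset.sum_pos' (fun j _ => mul_nonneg (hMnn i0 j) (hW₁pos j).le)
      ⟨j0, Finset.mem_univ _, mul_pos hMij (hW₁pos j0)⟩
  set u : Fin n → ℝ := (βstar - β) • (M *ᵥ W₁) with hu
  have hunn : ∀ i, 0 ≤ u i := fun i => by
    rw [hu]; simp only [Pi.smul_apply, smul_eq_mul]
    have := hMW₁nn i; nlinarith
  have hune : u ≠ 0 := by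
    intro h
    have := congrFun h i0
    rw [hu] at this
    simp only [Pi.smul_apply, smul_eq_mul, Pi.zero_apply] at this
    have hd : 0 < βstar - β := by linarith
    nlinarith
  -- Astar W₁ ≥ c W₁ + u entrywise
  have hAstarAβ : Astar = Aβ + (βstar - β) • M := by
    rw [hAstar, hAβ, sub_smul]; abel
  have hstarW₁ : ∀ i, c * W₁ i + u i ≤ (Astar *ᵥ W₁) i := by
    intro i
    have e1 : Astar *ᵥ W₁ = Aβ *ᵥ W₁ + u := by
      rw [hAstarAβ, Matrix.add_mulVec, Matrix.smul_mulVec, hu]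
    rw [e1]
    simp only [Pi.add_apply]
    have h1 := hAβW₁ i
    have h2 : c * W₁ i ≤ (l + c) * W₁ i := by
      have := (hW₁pos i).le; nlinarith
    linarith
  -- positivize again with respect to Astar
  obtain ⟨m₂, hQ₂pos⟩ := exists_pos_one_add_pow Astar hAstarnn hirrstar
  set Q₂ : Matrix (Fin n) (Fin n) ℝ := (1 + Astar) ^ m₂ with hQ₂def
  have hQ₂nn : ∀ i j, 0 ≤ Q₂ i j := fun i j => (hQ₂pos i j).le
  set W₂ := Q₂ *ᵥ W₁ with hW₂def
  set u₂ := Q₂ *ᵥ u with hu₂def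
  have hW₂pos : ∀ i, 0 < W₂ i :=
    pos_mulVec_pos Q₂ hQ₂pos W₁ (fun i => (hW₁pos i).le)
      (by intro h; exact (hW₁pos (Classical.arbitrary (Fin n))).ne' (congrFun h _))
  have hu₂pos : ∀ i, 0 < u₂ i := pos_mulVec_pos Q₂ hQ₂pos u hunn hune
  have hcomm₂ : Astar * Q₂ = Q₂ * Astar := by
    have : Commute Astar Q₂ :=
      ((Commute.one_right Astar).add_right (Commute.refl Astar)).pow_right m₂
    exact this
  have hstarW₂ : ∀ i, c * W₂ i + u₂ i ≤ (Astar *ᵥ W₂) i := by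
    intro i
    have e1 : Astar *ᵥ W₂ = Q₂ *ᵥ (Astar *ᵥ W₁) := by
      rw [hW₂def, Matrix.mulVec_mulVec (v := W₁), Matrix.mulVec_mulVec (v := W₁), hcomm₂]
    have e2 : (Q₂ *ᵥ (c • W₁ + u)) i ≤ (Q₂ *ᵥ (Astar *ᵥ W₁)) i :=
      mulVec_entry_mono Q₂ hQ₂nn _ _ (fun j => by simpa using hstarW₁ j) i
    have e3 : (Q₂ *ᵥ (c • W₁ + u)) i = c * W₂ i + u₂ i := by
      rw [Matrix.mulVec_add, Matrix.mulVec_smul, hW₂def, hu₂def]; simp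
    rw [e1, ← e3]; exact e2
  have hne : (Finset.univ : Finset (Fin n)).Nonempty := Finset.univ_nonempty
  set ε : ℝ := Finset.univ.inf' hne (fun i => u₂ i / W₂ i) with hε
  have hεpos : 0 < ε := by
    rw [hε, Finset.lt_inf'_iff]
    exact fun i _ => div_pos (hu₂pos i) (hW₂pos i)
  have hAstarW₂ : ∀ i, (c + ε) * W₂ i ≤ (Astar *ᵥ W₂) i := by
    intro i
    have h1 : ε ≤ u₂ i / W₂ i := Finset.inf'_le _ (Finset.mem_univ i)
    have h2 : ε * W₂ i ≤ u₂ i := by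
      rw [← div_mul_cancel₀ (u₂ i) (hW₂pos i).ne']
      exact mul_le_mul_of_nonneg_right h1 (hW₂pos i).le
    have h3 := hstarW₂ i
    nlinarith
  -- Perron-Frobenius: real eigenvalue t ≥ c + ε of Astar
  obtain ⟨t, hts, V', hV'ne, hV'eig⟩ :=
    pf_exists_real_eigen hn Astar hAstarnn hirrstar W₂ (fun i => (hW₂pos i).le)
      (by intro h; exact (hW₂pos (Classical.arbitrary (Fin n))).ne' (congrFun h _))
      (c + ε) (by linarith) hAstarW₂
  -- t - c > 0 is a real eigenvalue of J_{βstar}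
  have hJstar : (βstar • M + G - D) *ᵥ V' = (t - c) • V' := by
    have := hAstarJ V'
    rw [hV'eig] at this
    have e : (βstar • M + G - D) *ᵥ V' = t • V' - c • V' := by
      rw [eq_comm] at this
      ext i
      have := congrFun this i
      simp only [Pi.add_apply, Pi.smul_apply, smul_eq_mul, Pi.sub_apply] at *
      linarith
    rw [e, ← sub_smul]
  have haeval := real_eigen_aeval_zero (βstar • M + G - D) (t - c) V' hV'ne hJstar
  have hre := hcrit.2 ((t - c : ℝ) : ℂ) haeval
  rw [Complex.ofReal_re] at hre
  linarith
end

section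
/- Let n ≥ 1, let M and G be nonnegative n×n real matrices, let D be a nonnegative diagonal n×n real matrix, and for β > 0 set J_β = β M + G − D. Assume that β M + G is irreducible for every β > 0, that every row sum of G − D is strictly negative, and that every row sum of M is strictly positive. Then there exists β* > 0 such that λ_max(J_{β*}) = 0 and λ_max(J_β) < 0 for every β with 0 < β < β*. -/
open Matrix Polynomial Finset

namespace Stmt7Aux

variable {n : ℕ}

lemma pow_entry_nonneg {B : Matrix (Fin n) (Fin n) ℝ} (hB : ∀ i j, 0 ≤ B i j) :
    ∀ (k : ℕ) (i j : Fin n), 0 ≤ (B ^ k) i j := by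
  intro k
  induction k with
  | zero =>
    intro i j
    simp only [pow_zero, Matrix.one_apply]
    split <;> norm_num
  | succ k ih =>
    intro i j
    rw [pow_succ, Matrix.mul_apply]
    exact Finset.sum_nonneg fun l _ => mul_nonneg (ih i l) (hB l j)

lemma pow_entry_le {A B : Matrix (Fin n) (Fin n) ℝ} (hA : ∀ i j, 0 ≤ A i j)
    (hAB : ∀ i j, A i j ≤ B i j) :
    ∀ (k : ℕ) (i j : Fin n), (A ^ k) i j ≤ (B ^ k) i j := by
  intro k
  induction k with
  | zero => intro i j; simp
  | succ k ih =>
    intro i j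
    rw [pow_succ, pow_succ, Matrix.mul_apply, Matrix.mul_apply]
    refine Finset.sum_le_sum fun l _ => mul_le_mul (ih i l) (hAB l j) (hA l j)
      (le_trans (pow_entry_nonneg hA k i l) (ih i l))

lemma exists_pow_pos_le (hn : 0 < n) {B : Matrix (Fin n) (Fin n) ℝ}
    (hB : ∀ i j, 0 ≤ B i j) {i j : Fin n} (hij : i ≠ j) {k : ℕ}
    (hk : 0 < (B ^ k) i j) : ∃ m, 0 < m ∧ m ≤ n - 1 ∧ 0 < (B ^ m) i j := by
  classical
  set R : ℕ → Finset (Fin n) := fun t => univ.filter (fun p => ∃ m ≤ t, 0 < (B ^ m) i p) with hR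
  have hmem : ∀ t p, p ∈ R t ↔ ∃ m ≤ t, 0 < (B ^ m) i p := by intro t p; simp [hR]
  have hiR : ∀ t, i ∈ R t := fun t => (hmem t i).2 ⟨0, Nat.zero_le t, by simp⟩
  have hmono : ∀ a b, a ≤ b → R a ⊆ R b := by
    intro a b hab p hp
    rw [hmem] at hp ⊢
    obtain ⟨m, hm, h⟩ := hp
    exact ⟨m, hm.trans hab, h⟩
  have hstep₁ : ∀ t p, p ∈ R (t+1) → p ∈ R t ∨ ∃ l, l ∈ R t ∧ 0 < B l p := by
    intro t p hp
    rw [hmem] at hp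
    obtain ⟨m, hm, h⟩ := hp
    rcases Nat.lt_succ_iff_lt_or_eq.mp (Nat.lt_succ_of_le hm) with hm' | rfl
    · exact Or.inl ((hmem t p).2 ⟨m, Nat.lt_succ_iff.mp hm', h⟩)
    · right
      rw [pow_succ, Matrix.mul_apply] at h
      by_contra hc
      push_neg at hc
      have : ∀ l ∈ (univ : Finset (Fin n)), (B ^ t) i l * B l p ≤ 0 := by
        intro l _
        rcases lt_or_ge 0 ((B ^ t) i l) with h1 | h1
        · have hl : l ∈ R t := (hmem t l).2 ⟨t, le_refl t, h1⟩
          have := hc l hl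
          have : B l p = 0 := le_antisymm this (hB l p)
          simp [this]
        · have : (B ^ t) i l = 0 := le_antisymm h1 (pow_entry_nonneg hB t i l)
          simp [this]
      exact absurd (Finset.sum_nonpos this) (not_le.mpr h)
  have hstep₂ : ∀ t l p, l ∈ R t → 0 < B l p → p ∈ R (t+1) := by
    intro t l p hl hB1
    rw [hmem] at hl ⊢
    obtain ⟨m, hm, h⟩ := hl
    refine ⟨m + 1, Nat.succ_le_succ hm, ?_⟩
    rw [pow_succ, Matrix.mul_apply]
    calc (0:ℝ) < (B ^ m) i l * B l p := mul_pos h hB1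
    _ ≤ ∑ q, (B ^ m) i q * B q p := by
        exact Finset.single_le_sum (fun q _ => mul_nonneg (pow_entry_nonneg hB m i q) (hB q p))
          (Finset.mem_univ l)
  have hstab : ∀ t, R t = R (t+1) → ∀ s, R (t + s) = R t := by
    intro t ht s
    induction s with
    | zero => rfl
    | succ s ih =>
      apply Finset.Subset.antisymm
      · intro p hp
        have : t + (s + 1) = (t + s) + 1 := by omega
        rw [this] at hp
        rcases hstep₁ (t + s) p hp with h | ⟨l, hl, hBl⟩
        · rwa [ih] at h
        · rw [ih] at hl
          rw [ht]
          exact hstep₂ t l p hl hBl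
      · exact hmono t (t + (s+1)) (Nat.le_add_right _ _)
  have hstable : ∃ t, t ≤ n - 1 ∧ R t = R (t+1) := by
    by_contra hc
    push_neg at hc
    have hcard : ∀ t, t ≤ n → t + 1 ≤ (R t).card := by
      intro t
      induction t with
      | zero => intro _; exact Finset.card_pos.mpr ⟨i, hiR 0⟩
      | succ t ih =>
        intro ht
        have h1 : t ≤ n - 1 := by omega
        have h2 : R t ≠ R (t+1) := hc t h1
        have h3 : R t ⊂ R (t+1) := lt_of_le_of_ne (hmono t (t+1) (Nat.le_succ t)) h2
        have := Finset.card_lt_card h3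
        have := ih (by omega)
        omega
    have h1 := hcard n (le_refl n)
    have h2 : (R n).card ≤ n := by
      have := Finset.card_le_univ (R n)
      simpa using this
    omega
  obtain ⟨t, ht, hstabt⟩ := hstable
  have hjR : j ∈ R (n - 1) := by
    have hjk : j ∈ R k := (hmem k j).2 ⟨k, le_refl k, hk⟩
    rcases le_or_gt k (n-1) with h | h
    · exact hmono k (n-1) h hjk
    · have : R k = R t := by
        have : k = t + (k - t) := by omega
        rw [this] at hjk ⊢
        exact hstab t hstabt (k - t)
      rw [this] at hjk
      exact hmono t (n-1) ht hjk
  rw [hmem] at hjR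
  obtain ⟨m, hm, hpos⟩ := hjR
  refine ⟨m, ?_, hm, hpos⟩
  rcases Nat.eq_zero_or_pos m with rfl | h
  · simp [Matrix.one_apply, hij] at hpos
  · exact h

lemma le_one_add_pow {B : Matrix (Fin n) (Fin n) ℝ} (hB : ∀ i j, 0 ≤ B i j) :
    ∀ (m k : ℕ), k ≤ m → ∀ i j, (B ^ k) i j ≤ ((1 + B) ^ m) i j := by
  have h1B : ∀ i j, (0:ℝ) ≤ (1 + B) i j := by
    intro i j
    rw [Matrix.add_apply]
    have : (0:ℝ) ≤ (1 : Matrix (Fin n) (Fin n) ℝ) i j := by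
      rw [Matrix.one_apply]; split <;> norm_num
    linarith [hB i j]
  intro m
  induction m with
  | zero =>
    intro k hk i j
    interval_cases k
    simp
  | succ m ih =>
    intro k hk i j
    have hP : ∀ i j, (0:ℝ) ≤ ((1+B)^m) i j := pow_entry_nonneg h1B m
    have hPB : (0:ℝ) ≤ (((1+B)^m) * B) i j := by
      rw [Matrix.mul_apply]
      exact Finset.sum_nonneg fun l _ => mul_nonneg (hP i l) (hB l j)
    have hsplit : ((1+B)^(m+1)) i j = ((1+B)^m) i j + (((1+B)^m) * B) i j := by
      rw [pow_succ, mul_add, mul_one, Matrix.add_apply]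
    rcases Nat.lt_succ_iff_lt_or_eq.mp (Nat.lt_succ_of_le hk) with h | rfl
    · have := ih k (Nat.lt_succ_iff.mp h) i j
      rw [hsplit]; linarith
    · rw [hsplit, pow_succ, Matrix.mul_apply, Matrix.mul_apply]
      have hsum : ∑ l, (B ^ m) i l * B l j ≤ ∑ l, ((1+B)^m) i l * B l j :=
        Finset.sum_le_sum fun l _ => mul_le_mul_of_nonneg_right (ih m (le_refl m) i l) (hB l j)
      have hPij := hP i j
      linarith

lemma P_pos (hn : 0 < n) {B : Matrix (Fin n) (Fin n) ℝ} (hB : ∀ i j, 0 ≤ B i j)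
    (hirr : ∀ i j, ∃ k, 0 < k ∧ 0 < (B ^ k) i j) :
    ∀ i j, 0 < ((1 + B) ^ (n - 1)) i j := by
  intro i j
  by_cases hij : i = j
  · subst hij
    have h0 : (0:ℝ) < (B ^ 0) i i := by simp
    exact lt_of_lt_of_le h0 (le_one_add_pow hB (n-1) 0 (Nat.zero_le _) i i)
  · obtain ⟨k, hk0, hk⟩ := hirr i j
    obtain ⟨m, hm0, hmle, hmpos⟩ := exists_pow_pos_le hn hB hij hk
    exact lt_of_lt_of_le hmpos (le_one_add_pow hB (n-1) m hmle i j)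

lemma mulVec_pos {P : Matrix (Fin n) (Fin n) ℝ} (hP : ∀ i j, 0 < P i j)
    {x : Fin n → ℝ} (hx : ∀ i, 0 ≤ x i) (hx0 : x ≠ 0) : ∀ i, 0 < P.mulVec x i := by
  obtain ⟨j, hj⟩ : ∃ j, 0 < x j := by
    by_contra hc
    push_neg at hc
    exact hx0 (funext fun j => le_antisymm (hc j) (hx j))
  intro i
  have h1 : (0:ℝ) < P i j * x j := mul_pos (hP i j) hj
  have h2 : P i j * x j ≤ ∑ l, P i l * x l :=
    Finset.single_le_sum (fun l _ => mul_nonneg (hP i l).le (hx l)) (Finset.mem_univ j)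
  have : P.mulVec x i = ∑ l, P i l * x l := by simp [Matrix.mulVec, dotProduct]
  linarith

lemma continuousOn_inf' {ι X : Type*} [TopologicalSpace X] {s : Finset ι} (hs : s.Nonempty)
    {f : ι → X → ℝ} {t : Set X} (h : ∀ i, ContinuousOn (f i) t) :
    ContinuousOn (fun x => s.inf' hs (fun i => f i x)) t := by
  induction hs using Finset.Nonempty.cons_induction with
  | singleton a => simpa using h a
  | cons a s ha hs ih =>
    have : (fun x => (Finset.cons a s ha).inf' (Finset.cons_nonempty ha) (fun i => f i x))
        = fun x => min (f a x) (s.inf' hs (fun i => f i x)) := by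
      ext x
      rw [Finset.inf'_cons]
    rw [this]
    exact (h a).inf' ih

lemma pf_exists (hn : 0 < n) (B : Matrix (Fin n) (Fin n) ℝ) (hB : ∀ i j, 0 ≤ B i j)
    (hirr : ∀ i j, ∃ k, 0 < k ∧ 0 < (B ^ k) i j) :
    ∃ (x : Fin n → ℝ) (r : ℝ), (∀ i, 0 < x i) ∧ B.mulVec x = r • x := by
  classical
  haveI : Nonempty (Fin n) := ⟨⟨0, hn⟩⟩
  set P := (1 + B) ^ (n - 1) with hPdef
  have hP : ∀ i j, 0 < P i j := P_pos hn hB hirr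
  have hmv : ∀ (A : Matrix (Fin n) (Fin n) ℝ) (v : Fin n → ℝ) (i : Fin n),
      A.mulVec v i = ∑ j, A i j * v j := by
    intro A v i; simp [Matrix.mulVec, dotProduct]
  set f : (Fin n → ℝ) → ℝ :=
    fun z => univ.inf' univ_nonempty (fun i => B.mulVec z i / z i) with hfdef
  set C : Set (Fin n → ℝ) := (fun x => P.mulVec x) '' stdSimplex ℝ (Fin n) with hCdef
  -- continuity of mulVec
  have hmvc : ∀ (A : Matrix (Fin n) (Fin n) ℝ), Continuous (fun x : Fin n → ℝ => A.mulVec x) := by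
    intro A
    have : (fun x : Fin n → ℝ => A.mulVec x) = fun x i => ∑ j, A i j * x j := by
      ext x i; exact hmv A x i
    rw [this]
    exact continuous_pi fun i =>
      continuous_finset_sum _ fun j _ => (continuous_const.mul (continuous_apply j))
  have hCcomp : IsCompact C := (isCompact_stdSimplex _ _).image (hmvc P)
  have hCpos : ∀ z ∈ C, ∀ i, 0 < z i := by
    rintro z ⟨x, hx, rfl⟩ i
    refine mulVec_pos hP hx.1 ?_ i
    intro h0
    have := hx.2
    rw [h0] at this
    simp at this
  have hCne : C.Nonempty := by
    refine ⟨P.mulVec (fun _ => (n:ℝ)⁻¹), ⟨fun _ => (n:ℝ)⁻¹, ⟨?_, ?_⟩, rfl⟩⟩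
    · intro i; positivity
    · rw [Finset.sum_const, card_univ, Fintype.card_fin]
      rw [nsmul_eq_mul, mul_inv_cancel₀ (Nat.cast_ne_zero.mpr hn.ne')]
  have hfc : ContinuousOn f C := by
    apply continuousOn_inf' univ_nonempty
    intro i
    apply ContinuousOn.div
    · exact ((continuous_apply i).comp (hmvc B)).continuousOn
    · exact (continuous_apply i).continuousOn
    · intro z hz; exact ne_of_gt (hCpos z hz i)
  obtain ⟨z, hzC, hzmax⟩ := hCcomp.exists_isMaxOn hCne hfc
  set r := f z with hrdef
  have hzpos : ∀ i, 0 < z i := hCpos z hzC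
  have hBz : ∀ i, r * z i ≤ B.mulVec z i := by
    intro i
    have h1 : r ≤ B.mulVec z i / z i := Finset.inf'_le _ (Finset.mem_univ i)
    exact (le_div_iff₀ (hzpos i)).mp h1
  refine ⟨z, r, hzpos, ?_⟩
  by_contra hne
  -- w = Bz - r z  is nonneg and nonzero
  set w : Fin n → ℝ := fun i => B.mulVec z i - r * z i with hwdef
  have hw0 : ∀ i, 0 ≤ w i := fun i => by simp [hwdef]; linarith [hBz i]
  have hwne : w ≠ 0 := by
    intro h
    apply hne
    funext i
    have : w i = 0 := by rw [h]; rfl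
    simp [hwdef] at this
    simp [Pi.smul_apply, smul_eq_mul]
    linarith
  have hu : ∀ i, 0 < P.mulVec w i := mulVec_pos hP hw0 hwne
  set z' := P.mulVec z with hz'def
  have hz'pos : ∀ i, 0 < z' i := by
    refine mulVec_pos hP (fun i => (hzpos i).le) ?_
    intro h
    have := congrFun h ⟨0, hn⟩
    exact absurd this (ne_of_gt (hzpos ⟨0, hn⟩))
  -- commutation
  have hcomm : P * B = B * P := by
    have h1 : Commute (1 + B) B := ((Commute.one_left B).add_left (Commute.refl B))
    exact (h1.pow_left (n-1)).eq
  have hBz' : ∀ i, B.mulVec z' i = r * z' i + P.mulVec w i := by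
    intro i
    have h1 : B.mulVec z' = P.mulVec (B.mulVec z) := by
      rw [hz'def, Matrix.mulVec_mulVec, Matrix.mulVec_mulVec, hcomm]
    have h2 : B.mulVec z = fun i => w i + r * z i := by
      funext i; simp [hwdef]
    rw [h1, h2]
    have h3 : (fun i => w i + r * z i) = w + r • z := by
      funext i; simp [Pi.add_apply, Pi.smul_apply, smul_eq_mul]
    rw [h3, Matrix.mulVec_add, Matrix.mulVec_smul]
    simp [Pi.add_apply, Pi.smul_apply, smul_eq_mul, hz'def]
    ring
  have hfz' : r < f z' := by
    rw [hfdef]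
    rw [Finset.lt_inf'_iff]
    intro i _
    rw [lt_div_iff₀ (hz'pos i)]
    have := hu i
    rw [hBz' i]
    linarith
  -- rescale z' into C
  set s : ℝ := ∑ i, z i with hsdef
  have hspos : 0 < s := Finset.sum_pos (fun i _ => hzpos i) univ_nonempty
  have hz''C : s⁻¹ • z' ∈ C := by
    refine ⟨s⁻¹ • z, ⟨fun i => ?_, ?_⟩, ?_⟩
    · simp only [Pi.smul_apply, smul_eq_mul]
      exact mul_nonneg (inv_nonneg.mpr hspos.le) (hzpos i).le
    · simp only [Pi.smul_apply, smul_eq_mul, ← Finset.mul_sum]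
      field_simp
      exact hsdef.symm
    · show P *ᵥ (s⁻¹ • z) = s⁻¹ • z'
      rw [Matrix.mulVec_smul]
  have hfeq : f (s⁻¹ • z') = f z' := by
    rw [hfdef]
    apply Finset.inf'_congr _ rfl
    intro i _
    rw [Matrix.mulVec_smul]
    simp only [Pi.smul_apply, smul_eq_mul]
    rw [mul_div_mul_left _ _ (by positivity : s⁻¹ ≠ 0)]
  have h2 : f (s⁻¹ • z') ≤ f z := hzmax hz''C
  rw [hfeq] at h2
  exact absurd (lt_of_lt_of_le hfz' h2) (lt_irrefl r)

lemma eval_charpoly' {R : Type*} [CommRing R] (M : Matrix (Fin n) (Fin n) R) (t : R) :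
    M.charpoly.eval t = (t • (1 : Matrix (Fin n) (Fin n) R) - M).det := by
  rw [Matrix.charpoly, ← Polynomial.coe_evalRingHom, RingHom.map_det]
  congr 1
  ext i j
  by_cases h : i = j
  · subst h
    simp [Matrix.charmatrix_apply, Matrix.sub_apply, Matrix.smul_apply, Matrix.one_apply]
  · simp [Matrix.charmatrix_apply, Matrix.sub_apply, Matrix.smul_apply, Matrix.one_apply, h,
      Matrix.diagonal_apply_ne _ h]

lemma root_of_eig {J : Matrix (Fin n) (Fin n) ℝ} {Z : Fin n → ℝ} {l : ℝ}
    (hZ : Z ≠ 0) (h : J.mulVec Z = l • Z) : (Polynomial.aeval (l : ℂ)) J.charpoly = 0 := by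
  have h1 : (l • (1 : Matrix (Fin n) (Fin n) ℝ) - J).mulVec Z = 0 := by
    rw [Matrix.sub_mulVec, Matrix.smul_mulVec, Matrix.one_mulVec, h, sub_self]
  have h2 : (l • (1 : Matrix (Fin n) (Fin n) ℝ) - J).det = 0 :=
    Matrix.exists_mulVec_eq_zero_iff.mp ⟨Z, hZ, h1⟩
  have h3 : J.charpoly.eval l = 0 := by rw [eval_charpoly']; exact h2
  have h4 : ((l : ℂ)) = algebraMap ℝ ℂ l := rfl
  rw [h4, Polynomial.aeval_algebraMap_apply]
  have h5 : (Polynomial.aeval l) J.charpoly = 0 := by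
    rw [Polynomial.aeval_def]
    exact h3
  rw [h5, map_zero]

lemma charpoly_transpose (M : Matrix (Fin n) (Fin n) ℝ) : Mᵀ.charpoly = M.charpoly := by
  rw [Matrix.charpoly, Matrix.charpoly, ← Matrix.det_transpose (charmatrix M)]
  congr 1
  ext i j
  by_cases h : i = j
  · subst h; simp
  · simp [Matrix.charmatrix_apply, Matrix.transpose_apply, Matrix.diagonal_apply, h, Ne.symm h]

lemma eig_lower (hn : 0 < n) {J : Matrix (Fin n) (Fin n) ℝ} {x y : Fin n → ℝ} {t r' : ℝ}
    (hx : ∀ i, 0 < x i) (hy : ∀ i, 0 < y i)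
    (hyJ : Jᵀ.mulVec y = r' • y) (hsub : ∀ i, t * x i ≤ J.mulVec x i) : t ≤ r' := by
  haveI : Nonempty (Fin n) := ⟨⟨0, hn⟩⟩
  have hmv : ∀ (A : Matrix (Fin n) (Fin n) ℝ) (v : Fin n → ℝ) (i : Fin n),
      A.mulVec v i = ∑ j, A i j * v j := by
    intro A v i; simp [Matrix.mulVec, dotProduct]
  set S : ℝ := ∑ i, y i * x i with hSdef
  have hS : 0 < S := Finset.sum_pos (fun i _ => mul_pos (hy i) (hx i)) univ_nonempty
  have key : ∑ i, y i * J.mulVec x i = r' * S := by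
    calc ∑ i, y i * J.mulVec x i = ∑ i, ∑ j, y i * (J i j * x j) := by
          refine Finset.sum_congr rfl fun i _ => ?_
          rw [hmv, Finset.mul_sum]
        _ = ∑ j, (∑ i, Jᵀ j i * y i) * x j := by
          rw [Finset.sum_comm]
          refine Finset.sum_congr rfl fun j _ => ?_
          rw [Finset.sum_mul]
          refine Finset.sum_congr rfl fun i _ => ?_
          simp [Matrix.transpose_apply]; ring
        _ = ∑ j, (r' * y j) * x j := by
          refine Finset.sum_congr rfl fun j _ => ?_
          have := congrFun hyJ j
          rw [hmv] at this
          rw [this]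
          simp [Pi.smul_apply, smul_eq_mul]
        _ = r' * S := by rw [hSdef, Finset.mul_sum]; exact Finset.sum_congr rfl fun j _ => by ring
  have key2 : t * S ≤ ∑ i, y i * J.mulVec x i := by
    rw [hSdef, Finset.mul_sum]
    refine Finset.sum_le_sum fun i _ => ?_
    have := hsub i
    have hyi := (hy i).le
    calc t * (y i * x i) = y i * (t * x i) := by ring
    _ ≤ y i * J.mulVec x i := mul_le_mul_of_nonneg_left this hyi
  have := key2.trans (le_of_eq key)
  exact le_of_mul_le_mul_right (by linarith) hS

lemma lower_rowsum (hn : 0 < n) {J : Matrix (Fin n) (Fin n) ℝ}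
    (hoff : ∀ i j, i ≠ j → 0 ≤ J i j) {x : Fin n → ℝ} {r : ℝ} (hx : ∀ i, 0 < x i)
    (heig : J.mulVec x = r • x) : ∃ i, ∑ j, J i j ≤ r := by
  haveI : Nonempty (Fin n) := ⟨⟨0, hn⟩⟩
  obtain ⟨i, _, hi⟩ := Finset.exists_min_image univ x univ_nonempty
  use i
  have h1 : r * x i = ∑ j, J i j * x j := by
    have := congrFun heig i
    simp only [Matrix.mulVec, dotProduct, Pi.smul_apply, smul_eq_mul] at this
    rw [← this]
  have h2 : ∑ j, J i j * x i ≤ ∑ j, J i j * x j := by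
    refine Finset.sum_le_sum fun j _ => ?_
    rcases eq_or_ne j i with h | h
    · subst h; exact le_refl _
    · exact mul_le_mul_of_nonneg_left (hi j (mem_univ j)) (hoff i j (Ne.symm h))
  have h3 : (∑ j, J i j) * x i ≤ r * x i := by
    rw [Finset.sum_mul, h1]
    exact h2
  exact le_of_mul_le_mul_right h3 (hx i)

lemma re_le_of_subinv (hn : 0 < n) {J : Matrix (Fin n) (Fin n) ℝ}
    (hoff : ∀ i j, i ≠ j → 0 ≤ J i j) {x : Fin n → ℝ} (hx : ∀ i, 0 < x i) {t : ℝ}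
    (hsub : ∀ i, J.mulVec x i ≤ t * x i) :
    ∀ lam : ℂ, (Polynomial.aeval lam) J.charpoly = 0 → lam.re ≤ t := by
  intro lam hlam
  classical
  haveI : Nonempty (Fin n) := ⟨⟨0, hn⟩⟩
  set c : ℝ := max (univ.sup' univ_nonempty (fun i => -(J i i))) 0 with hcdef
  have hc0 : 0 ≤ c := le_max_right _ _
  have hcJ : ∀ i, 0 ≤ J i i + c := by
    intro i
    have : -(J i i) ≤ c :=
      le_trans (Finset.le_sup' (fun i => -(J i i)) (mem_univ i)) (le_max_left _ _)
    linarith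
  set A : Matrix (Fin n) (Fin n) ℝ := Matrix.of fun i j => J i j + if i = j then c else 0
    with hAdef
  have hAnn : ∀ i j, 0 ≤ A i j := by
    intro i j
    rcases eq_or_ne i j with rfl | h
    · simpa [hAdef] using hcJ i
    · simpa [hAdef, h] using hoff i j h
  have hAx : ∀ i, ∑ j, A i j * x j ≤ (t + c) * x i := by
    intro i
    have h1 : ∑ j, A i j * x j = (∑ j, J i j * x j) + c * x i := by
      simp only [hAdef, Matrix.of_apply, add_mul, ite_mul, zero_mul]
      rw [Finset.sum_add_distrib, Finset.sum_ite_eq (univ : Finset (Fin n)) i (fun j => c * x j)]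
      simp
    have h2 : ∑ j, J i j * x j ≤ t * x i := by
      have := hsub i
      simpa [Matrix.mulVec, dotProduct] using this
    rw [h1]; linarith [h2]
  -- complex eigenvector
  set Jc : Matrix (Fin n) (Fin n) ℂ := J.map (algebraMap ℝ ℂ) with hJcdef
  have hdet : (lam • (1 : Matrix (Fin n) (Fin n) ℂ) - Jc).det = 0 := by
    have h1 : (Polynomial.aeval lam) J.charpoly = (Jc.charpoly).eval lam := by
      rw [hJcdef, Matrix.charpoly_map, Polynomial.eval_map, Polynomial.aeval_def]
    rw [← eval_charpoly', ← h1]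
    exact hlam
  obtain ⟨v, hv0, hv⟩ := Matrix.exists_mulVec_eq_zero_iff.mpr hdet
  have hev : ∀ i, lam * v i = ∑ j, (J i j : ℂ) * v j := by
    intro i
    have h1 := congrFun hv i
    simp only [Matrix.sub_mulVec, Matrix.smul_mulVec, Matrix.one_mulVec, Pi.zero_apply,
      Pi.sub_apply, Pi.smul_apply, smul_eq_mul] at h1
    have h2 : Jc.mulVec v i = ∑ j, (J i j : ℂ) * v j := by
      simp [hJcdef, Matrix.mulVec, dotProduct, Matrix.map_apply]
    rw [← h2]
    linear_combination h1
  -- argmax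
  obtain ⟨i, _, hi⟩ := Finset.exists_max_image univ (fun i => ‖v i‖ / x i)
    univ_nonempty
  set m : ℝ := ‖v i‖ / x i with hmdef
  have hvj : ∀ j, ‖v j‖ ≤ m * x j := by
    intro j
    exact (div_le_iff₀ (hx j)).mp (hi j (mem_univ j))
  have hm : 0 < m := by
    obtain ⟨j, hj⟩ : ∃ j, v j ≠ 0 := Function.ne_iff.mp hv0
    have h1 : 0 < ‖v j‖ / x j := div_pos (by simpa using hj) (hx j)
    exact lt_of_lt_of_le h1 (hi j (mem_univ j))
  have hvi : ‖v i‖ = m * x i := by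
    rw [hmdef]
    exact (div_mul_cancel₀ _ (ne_of_gt (hx i))).symm
  have hvipos : 0 < ‖v i‖ := by rw [hvi]; exact mul_pos hm (hx i)
  -- key estimate
  have h1 : (lam + c) * v i = ∑ j, (A i j : ℂ) * v j := by
    have h2 : ∑ j, (A i j : ℂ) * v j = (∑ j, (J i j : ℂ) * v j) + c * v i := by
      have hterm : ∀ j, (A i j : ℂ) * v j
          = (J i j : ℂ) * v j + (if i = j then (c : ℂ) * v j else 0) := by
        intro j
        rcases eq_or_ne i j with rfl | h
        · simp [hAdef]; push_cast; ring
        · simp [hAdef, h]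
      rw [Finset.sum_congr rfl (fun j _ => hterm j), Finset.sum_add_distrib,
        Finset.sum_ite_eq (univ : Finset (Fin n)) i (fun j => (c : ℂ) * v j)]
      simp
    rw [h2, ← hev i]; ring
  have hkey : ‖lam + c‖ * ‖v i‖ ≤ (t + c) * ‖v i‖ := by
    calc ‖lam + c‖ * ‖v i‖ = ‖(lam + c) * v i‖ := by
          exact (norm_mul _ _).symm
      _ = ‖∑ j, (A i j : ℂ) * v j‖ := by rw [h1]
      _ ≤ ∑ j, ‖(A i j : ℂ) * v j‖ := by
          exact norm_sum_le _ _
      _ = ∑ j, A i j * ‖v j‖ := by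
          refine Finset.sum_congr rfl fun j _ => ?_
          rw [norm_mul, Complex.norm_real, Real.norm_eq_abs, abs_of_nonneg (hAnn i j)]
      _ ≤ ∑ j, A i j * (m * x j) := by
          refine Finset.sum_le_sum fun j _ => ?_
          exact mul_le_mul_of_nonneg_left (hvj j) (hAnn i j)
      _ = m * ∑ j, A i j * x j := by rw [Finset.mul_sum]; exact Finset.sum_congr rfl fun j _ => by ring
      _ ≤ m * ((t + c) * x i) := mul_le_mul_of_nonneg_left (hAx i) hm.le
      _ = (t + c) * ‖v i‖ := by rw [hvi]; ring
  have h2 : ‖lam + c‖ ≤ t + c := le_of_mul_le_mul_right hkey hvipos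
  have h3 : lam.re + c ≤ ‖lam + c‖ := by
    have := Complex.re_le_norm (lam + c)
    simpa using this
  linarith

lemma metzler_pf (hn : 0 < n) (J A : Matrix (Fin n) (Fin n) ℝ) (c : ℝ)
    (hB : ∀ i j, 0 ≤ (J + c • (1 : Matrix (Fin n) (Fin n) ℝ)) i j)
    (hA : ∀ i j, 0 ≤ A i j)
    (hAle : ∀ i j, A i j ≤ (J + c • (1 : Matrix (Fin n) (Fin n) ℝ)) i j)
    (hirr : ∀ i j, ∃ k, 0 < k ∧ 0 < (A ^ k) i j) :
    ∃ (x : Fin n → ℝ) (r : ℝ), (∀ i, 0 < x i) ∧ J.mulVec x = r • x := by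
  set B := J + c • (1 : Matrix (Fin n) (Fin n) ℝ) with hBdef
  have hirrB : ∀ i j, ∃ k, 0 < k ∧ 0 < (B ^ k) i j := by
    intro i j
    obtain ⟨k, hk, hpos⟩ := hirr i j
    exact ⟨k, hk, lt_of_lt_of_le hpos (pow_entry_le hA hAle k i j)⟩
  obtain ⟨x, ρ, hx, hBx⟩ := pf_exists hn B hB hirrB
  refine ⟨x, ρ - c, hx, ?_⟩
  have h1 : B.mulVec x = J.mulVec x + c • x := by
    rw [hBdef, Matrix.add_mulVec, Matrix.smul_mulVec, Matrix.one_mulVec]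
  rw [h1] at hBx
  funext i
  have := congrFun hBx i
  simp only [Pi.add_apply, Pi.smul_apply, smul_eq_mul] at this ⊢
  linarith

end Stmt7Aux

/-- For `J_β = β M + G - D` with `M, G` nonnegative, `D` nonnegative diagonal,
`β M + G` irreducible for every `β > 0`, all row sums of `G - D` strictly negative and
all row sums of `M` strictly positive, there is a threshold `β* > 0` with
`λ_max(J_{β*}) = 0` and `λ_max(J_β) < 0` for every `0 < β < β*`. -/
theorem stmt_7 {n : ℕ} (hn : 1 ≤ n)
    (M G D : Matrix (Fin n) (Fin n) ℝ)
    (hMnn : ∀ i j, 0 ≤ M i j) (hGnn : ∀ i j, 0 ≤ G i j)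
    (hDdiag : D.IsDiag) (hDnn : ∀ i, 0 ≤ D i i)
    (hirr : ∀ β : ℝ, 0 < β → ∀ i j, ∃ k : ℕ, 0 < k ∧ 0 < ((β • M + G) ^ k) i j)
    (hrowGD : ∀ i, ∑ j, (G - D) i j < 0)
    (hrowM : ∀ i, 0 < ∑ j, M i j) :
    ∃ βstar : ℝ, 0 < βstar ∧ IsLamMax (βstar • M + G - D) 0 ∧
      ∀ β : ℝ, 0 < β → β < βstar →
        ∀ l : ℝ, IsLamMax (β • M + G - D) l → l < 0 := by
  classical
  have hn0 : 0 < n := hn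
  haveI : Nonempty (Fin n) := ⟨⟨0, hn0⟩⟩
  have hmv : ∀ (A : Matrix (Fin n) (Fin n) ℝ) (v : Fin n → ℝ) (i : Fin n),
      A.mulVec v i = ∑ j, A i j * v j := by
    intro A v i; simp [Matrix.mulVec, dotProduct]
  have hJent : ∀ (β : ℝ) (i j : Fin n),
      (β • M + G - D) i j = β * M i j + G i j - D i j := by
    intro β i j
    simp [Matrix.sub_apply, Matrix.add_apply, Matrix.smul_apply, smul_eq_mul]
  have hGDent : ∀ i j : Fin n, (G - D) i j = G i j - D i j := by
    intro i j; simp [Matrix.sub_apply]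
  have hABent : ∀ (β : ℝ) (i j : Fin n), (β • M + G) i j = β * M i j + G i j := by
    intro β i j; simp [Matrix.add_apply, Matrix.smul_apply, smul_eq_mul]
  have hDoff : ∀ i j : Fin n, i ≠ j → D i j = 0 := fun i j h => hDdiag h
  have hoffJ : ∀ (β : ℝ), 0 < β → ∀ i j, i ≠ j → 0 ≤ (β • M + G - D) i j := by
    intro β hβ i j hij
    rw [hJent, hDoff i j hij]
    have h1 := mul_nonneg hβ.le (hMnn i j)
    have h2 := hGnn i j
    linarith
  set c : ℝ := univ.sup' univ_nonempty (fun i => D i i) with hcdef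
  have hcD : ∀ i, D i i ≤ c := fun i => Finset.le_sup' (fun i => D i i) (mem_univ i)
  have hrowsum : ∀ (β : ℝ) (i : Fin n),
      ∑ j, (β • M + G - D) i j = β * (∑ j, M i j) + ∑ j, (G - D) i j := by
    intro β i
    rw [Finset.mul_sum, ← Finset.sum_add_distrib]
    refine Finset.sum_congr rfl fun j _ => ?_
    rw [hJent, hGDent]; ring
  -- Perron-Frobenius pairs for each β > 0
  have key : ∀ β : ℝ, 0 < β → ∃ x : Fin n → ℝ, ∃ r : ℝ, (∀ i, 0 < x i) ∧
      (β • M + G - D).mulVec x = r • x := by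
    intro β hβ
    apply Stmt7Aux.metzler_pf hn0 _ (β • M + G) c
    · intro i j
      rcases eq_or_ne i j with rfl | h
      · simp only [Matrix.add_apply, Matrix.smul_apply, Matrix.one_apply_eq, smul_eq_mul,
          mul_one]
        rw [hJent]
        have h1 := mul_nonneg hβ.le (hMnn i i)
        have h2 := hGnn i i
        have h3 := hcD i
        linarith
      · simp only [Matrix.add_apply, Matrix.smul_apply, Matrix.one_apply_ne h, smul_eq_mul,
          mul_zero]
        have := hoffJ β hβ i j h
        linarith
    · intro i j
      rw [hABent]
      have h1 := mul_nonneg hβ.le (hMnn i j)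
      have h2 := hGnn i j
      linarith
    · intro i j
      rcases eq_or_ne i j with rfl | h
      · simp only [Matrix.add_apply, Matrix.smul_apply, Matrix.one_apply_eq, smul_eq_mul,
          mul_one]
        rw [hJent]
        have := hcD i
        linarith
      · simp only [Matrix.add_apply, Matrix.smul_apply, Matrix.one_apply_ne h, smul_eq_mul,
          mul_zero]
        rw [hJent, hDoff i j h]
        linarith
    · exact hirr β hβ
  have keyT : ∀ β : ℝ, 0 < β → ∃ y : Fin n → ℝ, ∃ r : ℝ, (∀ i, 0 < y i) ∧
      (β • M + G - D)ᵀ.mulVec y = r • y := by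
    intro β hβ
    apply Stmt7Aux.metzler_pf hn0 _ ((β • M + G)ᵀ) c
    · intro i j
      rcases eq_or_ne i j with rfl | h
      · simp only [Matrix.add_apply, Matrix.transpose_apply, Matrix.smul_apply,
          Matrix.one_apply_eq, smul_eq_mul, mul_one]
        rw [hJent]
        have h1 := mul_nonneg hβ.le (hMnn i i)
        have h2 := hGnn i i
        have h3 := hcD i
        linarith
      · simp only [Matrix.add_apply, Matrix.transpose_apply, Matrix.smul_apply,
          Matrix.one_apply_ne h, smul_eq_mul, mul_zero]
        have := hoffJ β hβ j i (Ne.symm h)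
        linarith
    · intro i j
      rw [Matrix.transpose_apply, hABent]
      have h1 := mul_nonneg hβ.le (hMnn j i)
      have h2 := hGnn j i
      linarith
    · intro i j
      rcases eq_or_ne i j with rfl | h
      · simp only [Matrix.add_apply, Matrix.transpose_apply, Matrix.smul_apply,
          Matrix.one_apply_eq, smul_eq_mul, mul_one]
        rw [hJent]
        have := hcD i
        linarith
      · simp only [Matrix.add_apply, Matrix.transpose_apply, Matrix.smul_apply,
          Matrix.one_apply_ne h, smul_eq_mul, mul_zero]
        rw [hJent, hDoff j i (Ne.symm h)]
        linarith
    · intro i j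
      obtain ⟨k, hk, hpos⟩ := hirr β hβ j i
      refine ⟨k, hk, ?_⟩
      rw [← Matrix.transpose_pow]
      simpa [Matrix.transpose_apply] using hpos
  choose X R hXpos hXeig using key
  choose Y RT hYpos hYeig using keyT
  have hXne : ∀ β (h : 0 < β), X β h ≠ 0 := by
    intro β h h0
    have := congrFun h0 ⟨0, hn0⟩
    exact absurd this (ne_of_gt (hXpos β h ⟨0, hn0⟩))
  have hYne : ∀ β (h : 0 < β), Y β h ≠ 0 := by
    intro β h h0
    have := congrFun h0 ⟨0, hn0⟩
    exact absurd this (ne_of_gt (hYpos β h ⟨0, hn0⟩))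
  have hroot : ∀ β (h : 0 < β),
      (Polynomial.aeval ((R β h : ℝ) : ℂ)) (β • M + G - D).charpoly = 0 :=
    fun β h => Stmt7Aux.root_of_eig (hXne β h) (hXeig β h)
  set S : Set ℝ := {β | ∃ h : 0 < β, R β h < 0} with hSdef
  -- a small β in S
  set β0 : ℝ := univ.inf' univ_nonempty
    (fun i => (-(∑ j, (G - D) i j)) / (2 * ∑ j, M i j)) with hβ0def
  have hβ0pos : 0 < β0 := by
    rw [hβ0def, Finset.lt_inf'_iff]
    intro i _
    exact div_pos (by linarith [hrowGD i]) (by linarith [hrowM i])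
  have hrow0 : ∀ i, ∑ j, (β0 • M + G - D) i j < 0 := by
    intro i
    have h1 : β0 ≤ (-(∑ j, (G - D) i j)) / (2 * ∑ j, M i j) :=
      Finset.inf'_le _ (mem_univ i)
    have h2 : 0 < 2 * ∑ j, M i j := by linarith [hrowM i]
    have h3 : β0 * (2 * ∑ j, M i j) ≤ -(∑ j, (G - D) i j) := by
      rw [← le_div_iff₀ h2]
      exact h1
    rw [hrowsum]
    nlinarith [hrowM i, hrowGD i]
  have hβ0S : β0 ∈ S := by
    set t : ℝ := univ.sup' univ_nonempty (fun i => ∑ j, (β0 • M + G - D) i j) with htdef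
    have ht0 : t < 0 := by
      rw [htdef, Finset.sup'_lt_iff]
      intro i _
      exact hrow0 i
    have hsub : ∀ i, (β0 • M + G - D).mulVec (fun _ => (1:ℝ)) i
        ≤ t * (fun _ => (1:ℝ)) i := by
      intro i
      show (β0 • M + G - D).mulVec (fun _ => (1:ℝ)) i ≤ t * 1
      rw [hmv, mul_one]
      have h1 : ∑ j, (β0 • M + G - D) i j * 1 = ∑ j, (β0 • M + G - D) i j := by simp
      rw [h1]
      exact Finset.le_sup' (fun i => ∑ j, (β0 • M + G - D) i j) (mem_univ i)
    have hre := Stmt7Aux.re_le_of_subinv hn0 (hoffJ β0 hβ0pos) (fun _ => one_pos) hsub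
      ((R β0 hβ0pos : ℝ) : ℂ) (hroot β0 hβ0pos)
    rw [Complex.ofReal_re] at hre
    exact ⟨hβ0pos, by linarith⟩
  -- S bounded above
  set β1 : ℝ := univ.sup' univ_nonempty
    (fun i => (1 - ∑ j, (G - D) i j) / (∑ j, M i j)) with hβ1def
  have hbdd : BddAbove S := by
    refine ⟨β1, ?_⟩
    rintro β ⟨hβ, hR⟩
    by_contra hgt
    push_neg at hgt
    have hrows : ∀ i, (1:ℝ) ≤ ∑ j, (β • M + G - D) i j := by
      intro i
      have h1 : (1 - ∑ j, (G - D) i j) / (∑ j, M i j) ≤ β1 :=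
        Finset.le_sup' (fun i => (1 - ∑ j, (G - D) i j) / (∑ j, M i j)) (mem_univ i)
      have h2 : (1 - ∑ j, (G - D) i j) / (∑ j, M i j) < β := lt_of_le_of_lt h1 hgt
      rw [div_lt_iff₀ (hrowM i)] at h2
      rw [hrowsum]
      linarith
    obtain ⟨i, hi⟩ := Stmt7Aux.lower_rowsum hn0 (hoffJ β hβ) (hXpos β hβ) (hXeig β hβ)
    have := hrows i
    linarith
  have hSne : S.Nonempty := ⟨β0, hβ0S⟩
  set βs : ℝ := sSup S with hβsdef
  have hβs_pos : 0 < βs := lt_of_lt_of_le hβ0pos (le_csSup hbdd hβ0S)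
  set xs : Fin n → ℝ := X βs hβs_pos with hxsdef
  set rs : ℝ := R βs hβs_pos with hrsdef
  have hxs : ∀ i, 0 < xs i := hXpos βs hβs_pos
  have hxse : (βs • M + G - D).mulVec xs = rs • xs := hXeig βs hβs_pos
  set K : ℝ := univ.sup' univ_nonempty (fun i => M.mulVec xs i / xs i) with hKdef
  have hMx0 : ∀ i, 0 ≤ M.mulVec xs i := by
    intro i; rw [hmv]; exact Finset.sum_nonneg fun j _ => mul_nonneg (hMnn i j) (hxs j).le
  have hK : ∀ i, M.mulVec xs i ≤ K * xs i := by
    intro i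
    have h1 : M.mulVec xs i / xs i ≤ K :=
      Finset.le_sup' (fun i => M.mulVec xs i / xs i) (mem_univ i)
    rw [div_le_iff₀ (hxs i)] at h1
    linarith [h1]
  have hK0 : 0 ≤ K := by
    have h1 : M.mulVec xs ⟨0, hn0⟩ / xs ⟨0, hn0⟩ ≤ K :=
      Finset.le_sup' (fun i => M.mulVec xs i / xs i) (mem_univ _)
    have h2 : 0 ≤ M.mulVec xs ⟨0, hn0⟩ / xs ⟨0, hn0⟩ := div_nonneg (hMx0 _) (hxs _).le
    linarith
  have hsplit : ∀ (a b : ℝ) (x : Fin n → ℝ) (i : Fin n),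
      (a • M + G - D).mulVec x i = (b • M + G - D).mulVec x i + (a - b) * M.mulVec x i := by
    intro a b x i
    rw [hmv, hmv, hmv, Finset.mul_sum, ← Finset.sum_add_distrib]
    refine Finset.sum_congr rfl fun j _ => ?_
    rw [hJent, hJent]; ring
  have hrs_ge : 0 ≤ rs := by
    by_contra hlt
    push_neg at hlt
    set δ : ℝ := (-rs) / (2 * (K + 1)) with hδdef
    have hδpos : 0 < δ := div_pos (by linarith) (by linarith)
    have hδK : δ * (2 * (K + 1)) = -rs := by
      rw [hδdef]; field_simp
    set β : ℝ := βs + δ with hβdef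
    have hβpos : 0 < β := by rw [hβdef]; linarith
    have hsub : ∀ i, (β • M + G - D).mulVec xs i ≤ (rs / 2) * xs i := by
      intro i
      rw [hsplit β βs xs i]
      have h2 : (βs • M + G - D).mulVec xs i = rs * xs i := by
        rw [hxse]; simp [Pi.smul_apply, smul_eq_mul]
      have h3 : β - βs = δ := by rw [hβdef]; ring
      rw [h2, h3]
      have h4 : δ * M.mulVec xs i ≤ δ * (K * xs i) :=
        mul_le_mul_of_nonneg_left (hK i) hδpos.le
      nlinarith [hxs i, hδpos]
    have hre := Stmt7Aux.re_le_of_subinv hn0 (hoffJ β hβpos) hxs hsub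
      ((R β hβpos : ℝ) : ℂ) (hroot β hβpos)
    rw [Complex.ofReal_re] at hre
    have hβS : β ∈ S := ⟨hβpos, by linarith⟩
    have hle := le_csSup hbdd hβS
    rw [← hβsdef] at hle
    rw [hβdef] at hle
    linarith
  have hrs_le : rs ≤ 0 := by
    by_contra hlt
    push_neg at hlt
    set δ : ℝ := rs / (2 * (K + 1)) with hδdef
    have hδpos : 0 < δ := div_pos hlt (by linarith)
    have hδK : δ * (2 * (K + 1)) = rs := by
      rw [hδdef]; field_simp
    obtain ⟨β, hβS, hβgt⟩ := exists_lt_of_lt_csSup hSne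
      (show βs - δ < sSup S by rw [← hβsdef]; linarith)
    obtain ⟨hβpos, hRβ⟩ := hβS
    have hsub : ∀ i, (rs / 2) * xs i ≤ (β • M + G - D).mulVec xs i := by
      intro i
      rw [hsplit β βs xs i]
      have h2 : (βs • M + G - D).mulVec xs i = rs * xs i := by
        rw [hxse]; simp [Pi.smul_apply, smul_eq_mul]
      rw [h2]
      have h3 : -δ ≤ β - βs := by linarith
      have h4 : -δ * M.mulVec xs i ≤ (β - βs) * M.mulVec xs i :=
        mul_le_mul_of_nonneg_right h3 (hMx0 i)
      have h5 : δ * M.mulVec xs i ≤ δ * (K * xs i) :=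
        mul_le_mul_of_nonneg_left (hK i) hδpos.le
      nlinarith [hxs i, hδpos]
    have hge := Stmt7Aux.eig_lower hn0 hxs (hYpos β hβpos) (hYeig β hβpos) hsub
    have hrootT : (Polynomial.aeval ((RT β hβpos : ℝ) : ℂ)) (β • M + G - D).charpoly = 0 := by
      have h1 := Stmt7Aux.root_of_eig (hYne β hβpos) (hYeig β hβpos)
      rwa [Stmt7Aux.charpoly_transpose] at h1
    have hsub2 : ∀ i, (β • M + G - D).mulVec (X β hβpos) i ≤ R β hβpos * X β hβpos i := by
      intro i
      rw [hXeig β hβpos]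
      simp [Pi.smul_apply, smul_eq_mul]
    have hle := Stmt7Aux.re_le_of_subinv hn0 (hoffJ β hβpos) (hXpos β hβpos) hsub2
      ((RT β hβpos : ℝ) : ℂ) hrootT
    rw [Complex.ofReal_re] at hle
    linarith
  have hrs0 : rs = 0 := le_antisymm hrs_le hrs_ge
  refine ⟨βs, hβs_pos, ⟨⟨xs, ?_, ?_⟩, ?_⟩, ?_⟩
  · intro h0
    have := congrFun h0 ⟨0, hn0⟩
    exact absurd this (ne_of_gt (hxs ⟨0, hn0⟩))
  · rw [hxse, hrs0]
  · have hsub : ∀ i, (βs • M + G - D).mulVec xs i ≤ 0 * xs i := by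
      intro i
      have h2 : (βs • M + G - D).mulVec xs i = rs * xs i := by
        rw [hxse]; simp [Pi.smul_apply, smul_eq_mul]
      rw [h2, hrs0]
    exact Stmt7Aux.re_le_of_subinv hn0 (hoffJ βs hβs_pos) hxs hsub
  · intro β hβ hβlt l hl
    obtain ⟨⟨Z, hZ, hZe⟩, _⟩ := hl
    have hMxpos : ∀ i, 0 < M.mulVec xs i := by
      intro i
      set xmin : ℝ := univ.inf' univ_nonempty xs with hxmindef
      have hxmin : 0 < xmin := by
        rw [hxmindef, Finset.lt_inf'_iff]; intro j _; exact hxs j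
      have h1 : ∑ j, M i j * xmin ≤ ∑ j, M i j * xs j :=
        Finset.sum_le_sum fun j _ =>
          mul_le_mul_of_nonneg_left (Finset.inf'_le xs (mem_univ j)) (hMnn i j)
      have h2 : 0 < (∑ j, M i j) * xmin := mul_pos (hrowM i) hxmin
      rw [hmv]
      rw [Finset.sum_mul] at h2
      linarith
    set m0 : ℝ := univ.inf' univ_nonempty (fun i => M.mulVec xs i / xs i) with hm0def
    have hm0pos : 0 < m0 := by
      rw [hm0def, Finset.lt_inf'_iff]; intro i _; exact div_pos (hMxpos i) (hxs i)
    have hm0le : ∀ i, m0 * xs i ≤ M.mulVec xs i := by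
      intro i
      have h1 : m0 ≤ M.mulVec xs i / xs i :=
        Finset.inf'_le (fun i => M.mulVec xs i / xs i) (mem_univ i)
      rw [le_div_iff₀ (hxs i)] at h1
      linarith
    set t : ℝ := -((βs - β) * m0) with htdef
    have ht : t < 0 := by
      have : 0 < (βs - β) * m0 := mul_pos (by linarith) hm0pos
      rw [htdef]; linarith
    have hsub : ∀ i, (β • M + G - D).mulVec xs i ≤ t * xs i := by
      intro i
      rw [hsplit β βs xs i]
      have h2 : (βs • M + G - D).mulVec xs i = rs * xs i := by
        rw [hxse]; simp [Pi.smul_apply, smul_eq_mul]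
      rw [h2, hrs0]
      have h3 : (β - βs) * M.mulVec xs i ≤ (β - βs) * (m0 * xs i) :=
        mul_le_mul_of_nonpos_left (hm0le i) (by linarith)
      have h4 : (β - βs) * (m0 * xs i) = t * xs i := by rw [htdef]; ring
      linarith
    have hroot_l : (Polynomial.aeval ((l : ℝ) : ℂ)) (β • M + G - D).charpoly = 0 :=
      Stmt7Aux.root_of_eig hZ hZe
    have hre := Stmt7Aux.re_le_of_subinv hn0 (hoffJ β hβ) hxs hsub ((l : ℝ) : ℂ) hroot_l
    rw [Complex.ofReal_re] at hre
    linarith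
end

section
/- Let β, δ, γ1, γ2, p0, k1, k2 be real numbers with γ1 + γ2 > 0, and set p1 = γ2/(γ1+γ2) and p2 = γ1/(γ1+γ2). Let J0 be the 2×2 real matrix with entries J0_{11} = β k1 p1 − (γ1+δ), J0_{12} = β k1 p1 + γ2, J0_{21} = β k1 p2 + γ1, J0_{22} = β p2 (k1 + p0 k2) − (γ2+δ). Then the discriminant of the characteristic polynomial of J0 satisfies (trace J0)^2 − 4 det J0 = (β(k1 − k2 p0 p2) + γ1 + γ2)^2 + 4 β k2 p0 p2 (γ1 + β k1 p2). In particular, if additionally β > 0, k1 ≥ 0, k2 > 0, p0 > 0, γ1 > 0 and γ2 > 0, then this discriminant is strictly positive and J0 has two distinct real eigenvalues. -/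
open Polynomial

lemma charpoly_root_iff (a b c d l : ℝ) :
    ((!![a,b;c,d] : Matrix (Fin 2) (Fin 2) ℝ).charpoly).IsRoot l ↔
      (l - a) * (l - d) - b * c = 0 := by
  rw [Matrix.charpoly, Matrix.det_fin_two]
  simp [Matrix.charmatrix_apply_eq, Matrix.charmatrix_apply_ne, Polynomial.IsRoot,
    Matrix.charmatrix_apply]

lemma two_roots (a b c d : ℝ) (h : 0 < (a + d) ^ 2 - 4 * (a * d - b * c)) :
    ∃ l1 l2 : ℝ, l1 ≠ l2 ∧ ((!![a,b;c,d] : Matrix (Fin 2) (Fin 2) ℝ).charpoly).IsRoot l1 ∧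
      ((!![a,b;c,d] : Matrix (Fin 2) (Fin 2) ℝ).charpoly).IsRoot l2 := by
  have hs : Real.sqrt ((a + d) ^ 2 - 4 * (a * d - b * c)) ^ 2 =
      (a + d) ^ 2 - 4 * (a * d - b * c) := Real.sq_sqrt h.le
  have hspos : 0 < Real.sqrt ((a + d) ^ 2 - 4 * (a * d - b * c)) := Real.sqrt_pos.2 h
  refine ⟨(a + d + Real.sqrt ((a + d) ^ 2 - 4 * (a * d - b * c))) / 2,
          (a + d - Real.sqrt ((a + d) ^ 2 - 4 * (a * d - b * c))) / 2,
          by intro hl; nlinarith, ?_, ?_⟩ <;>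
    rw [charpoly_root_iff] <;> linear_combination hs / 4

/-- For the Jacobian `J0` at the disease-free equilibrium of the two-layer mean-field
SIS system, the discriminant of the characteristic polynomial equals
`(β(k1 - k2 p0 p2) + γ1 + γ2)² + 4 β k2 p0 p2 (γ1 + β k1 p2)`; under the stated
positivity assumptions it is strictly positive and `J0` has two distinct real
eigenvalues. -/
theorem stmt_8 (β δ γ1 γ2 p0 k1 k2 : ℝ) (hγ : 0 < γ1 + γ2)
    (p1 p2 : ℝ) (hp1 : p1 = γ2 / (γ1 + γ2)) (hp2 : p2 = γ1 / (γ1 + γ2))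
    (J0 : Matrix (Fin 2) (Fin 2) ℝ)
    (hJ0 : J0 = !![β * k1 * p1 - (γ1 + δ), β * k1 * p1 + γ2;
                   β * k1 * p2 + γ1, β * p2 * (k1 + p0 * k2) - (γ2 + δ)]) :
    (J0.trace ^ 2 - 4 * J0.det =
      (β * (k1 - k2 * p0 * p2) + γ1 + γ2) ^ 2 +
        4 * β * k2 * p0 * p2 * (γ1 + β * k1 * p2)) ∧
    (0 < β → 0 ≤ k1 → 0 < k2 → 0 < p0 → 0 < γ1 → 0 < γ2 →
      0 < J0.trace ^ 2 - 4 * J0.det ∧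
      ∃ l1 l2 : ℝ, l1 ≠ l2 ∧ J0.charpoly.IsRoot l1 ∧ J0.charpoly.IsRoot l2) := by
  have hne : (γ1 + γ2) ≠ 0 := ne_of_gt hγ
  subst hJ0 hp1 hp2
  rw [Matrix.trace_fin_two_of, Matrix.det_fin_two_of]
  have hdisc : (β * k1 * (γ2 / (γ1 + γ2)) - (γ1 + δ) +
        (β * (γ1 / (γ1 + γ2)) * (k1 + p0 * k2) - (γ2 + δ))) ^ 2 -
      4 * ((β * k1 * (γ2 / (γ1 + γ2)) - (γ1 + δ)) *
            (β * (γ1 / (γ1 + γ2)) * (k1 + p0 * k2) - (γ2 + δ)) -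
          (β * k1 * (γ2 / (γ1 + γ2)) + γ2) * (β * k1 * (γ1 / (γ1 + γ2)) + γ1)) =
      (β * (k1 - k2 * p0 * (γ1 / (γ1 + γ2))) + γ1 + γ2) ^ 2 +
        4 * β * k2 * p0 * (γ1 / (γ1 + γ2)) * (γ1 + β * k1 * (γ1 / (γ1 + γ2))) := by
    field_simp
    ring
  refine ⟨hdisc, fun hβ hk1 hk2 hp0 hγ1 hγ2 => ?_⟩
  have hp2pos : 0 < γ1 / (γ1 + γ2) := div_pos hγ1 hγ
  have hpos2 : 0 < 4 * β * k2 * p0 * (γ1 / (γ1 + γ2)) * (γ1 + β * k1 * (γ1 / (γ1 + γ2))) := by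
    have h1 : 0 < γ1 + β * k1 * (γ1 / (γ1 + γ2)) := by positivity
    positivity
  have hDpos : 0 < (β * k1 * (γ2 / (γ1 + γ2)) - (γ1 + δ) +
        (β * (γ1 / (γ1 + γ2)) * (k1 + p0 * k2) - (γ2 + δ))) ^ 2 -
      4 * ((β * k1 * (γ2 / (γ1 + γ2)) - (γ1 + δ)) *
            (β * (γ1 / (γ1 + γ2)) * (k1 + p0 * k2) - (γ2 + δ)) -
          (β * k1 * (γ2 / (γ1 + γ2)) + γ2) * (β * k1 * (γ1 / (γ1 + γ2)) + γ1)) := by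
    rw [hdisc]
    nlinarith [sq_nonneg (β * (k1 - k2 * p0 * (γ1 / (γ1 + γ2))) + γ1 + γ2)]
  exact ⟨hDpos, two_roots _ _ _ _ hDpos⟩
end

section
/- Let δ, γ1, γ2, p0, k1, k2 be strictly positive real numbers, and set p1 = γ2/(γ1+γ2) and p2 = γ1/(γ1+γ2). Consider the quadratic polynomial in β given by Q(β) = k1 k2 p0 p2 p1 β² − (k2 p0 p2 (γ1+δ) + k1 (γ1+γ2+δ)) β + δ (γ1+γ2+δ), obtained from the critical condition β k2 p0 p2 (β k1 p1 − (γ1+δ)) = (β k1 − δ)(γ1+γ2+δ). Then Q has two distinct real roots β1 and β2 satisfying 0 < β1 < β2. -/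
/-- The quadratic `Q(β)` determining the critical transmission rate of the two-layer
mean-field SIS system has two distinct real roots `0 < β1 < β2`. -/
theorem stmt_11 (δ γ1 γ2 p0 k1 k2 : ℝ)
    (hδ : 0 < δ) (hγ1 : 0 < γ1) (hγ2 : 0 < γ2) (hp0 : 0 < p0)
    (hk1 : 0 < k1) (hk2 : 0 < k2)
    (p1 p2 : ℝ) (hp1 : p1 = γ2 / (γ1 + γ2)) (hp2 : p2 = γ1 / (γ1 + γ2))
    (Q : ℝ → ℝ)
    (hQ : ∀ β : ℝ, Q β =
      k1 * k2 * p0 * p2 * p1 * β ^ 2 -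
        (k2 * p0 * p2 * (γ1 + δ) + k1 * (γ1 + γ2 + δ)) * β +
        δ * (γ1 + γ2 + δ)) :
    ∃ β1 β2 : ℝ, 0 < β1 ∧ β1 < β2 ∧ Q β1 = 0 ∧ Q β2 = 0 := by
  have hγ12 : 0 < γ1 + γ2 := by linarith
  have hp1' : 0 < p1 := by rw [hp1]; positivity
  have hp2' : 0 < p2 := by rw [hp2]; positivity
  set a := k1 * k2 * p0 * p2 * p1 with ha
  set B := k2 * p0 * p2 * (γ1 + δ) + k1 * (γ1 + γ2 + δ) with hB
  set c := δ * (γ1 + γ2 + δ) with hc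
  have ha' : 0 < a := by positivity
  have hB' : 0 < B := by positivity
  have hc' : 0 < c := by positivity
  set D := B ^ 2 - 4 * a * c with hD
  -- D > 0
  have hkey : p1 * δ < γ1 + δ := by
    rw [hp1]
    have : γ2 / (γ1 + γ2) < 1 := by
      rw [div_lt_one hγ12]; linarith
    nlinarith
  have hD' : 0 < D := by
    have h1 : B ^ 2 - 4 * a * c =
        (k2 * p0 * p2 * (γ1 + δ) - k1 * (γ1 + γ2 + δ)) ^ 2
        + 4 * (k2 * p0 * p2) * (k1 * (γ1 + γ2 + δ)) * ((γ1 + δ) - p1 * δ) := by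
      rw [ha, hB, hc]; ring
    have h2 : 0 < 4 * (k2 * p0 * p2) * (k1 * (γ1 + γ2 + δ)) * ((γ1 + δ) - p1 * δ) := by
      have : 0 < (γ1 + δ) - p1 * δ := by linarith
      positivity
    nlinarith [sq_nonneg (k2 * p0 * p2 * (γ1 + δ) - k1 * (γ1 + γ2 + δ))]
  set s := Real.sqrt D with hs
  have hs2 : s ^ 2 = D := Real.sq_sqrt hD'.le
  have hs' : 0 < s := Real.sqrt_pos.mpr hD'
  have hsB : s < B := by
    nlinarith [hs2, hD, ha', hc']
  refine ⟨(B - s) / (2 * a), (B + s) / (2 * a), ?_, ?_, ?_, ?_⟩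
  · apply div_pos (by linarith) (by linarith)
  · apply div_lt_div_of_pos_right (by linarith) (by linarith)
  · rw [hQ]
    have hx : a * ((B - s) / (2 * a)) ^ 2 - B * ((B - s) / (2 * a)) + c
        = (s ^ 2 - D) / (4 * a) := by
      rw [hD]; field_simp; ring
    rw [hx, hs2, sub_self, zero_div]
  · rw [hQ]
    have hx : a * ((B + s) / (2 * a)) ^ 2 - B * ((B + s) / (2 * a)) + c
        = (s ^ 2 - D) / (4 * a) := by
      rw [hD]; field_simp; ring
    rw [hx, hs2, sub_self, zero_div]
end

section
/- Let n ≥ 1, let B be a nonnegative irreducible n×n real matrix, and let D be a diagonal n×n real matrix with all diagonal entries strictly positive. Then λ_max(B − D) = 0 if and only if λ_max(D^{-1} B) = 1. -/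
namespace Stmt14Aux

open Matrix Polynomial Finset



variable {n : ℕ}

/-- entrywise: `0 ≤ P^k` and `P^k ≤ Q^k` when `0 ≤ P ≤ Q`. -/
lemma entry_pow_le {P Q : Matrix (Fin n) (Fin n) ℝ}
    (hP : ∀ i j, 0 ≤ P i j) (hPQ : ∀ i j, P i j ≤ Q i j) (k : ℕ) :
    (∀ i j, 0 ≤ (P ^ k) i j) ∧ (∀ i j, (P ^ k) i j ≤ (Q ^ k) i j) := by
  induction k with
  | zero =>
      constructor
      · intro i j; rw [pow_zero]
        by_cases h : i = j <;> simp [Matrix.one_apply, h]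
      · intro i j; rw [pow_zero, pow_zero]
  | succ k ih =>
      constructor
      · intro i j
        rw [pow_succ, Matrix.mul_apply]
        exact Finset.sum_nonneg fun l _ => mul_nonneg (ih.1 i l) (hP l j)
      · intro i j
        rw [pow_succ, pow_succ, Matrix.mul_apply, Matrix.mul_apply]
        refine Finset.sum_le_sum fun l _ => mul_le_mul (ih.2 i l) (hPQ l j) (hP l j) ?_
        exact le_trans (ih.1 i l) (ih.2 i l)

lemma eig_root (M : Matrix (Fin n) (Fin n) ℝ) (c : ℝ) (v : Fin n → ℝ)
    (hv : v ≠ 0) (h : M.mulVec v = c • v) :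
    (Polynomial.aeval (c : ℂ)) M.charpoly = 0 := by
  have hdet : (c • (1 : Matrix (Fin n) (Fin n) ℝ) - M).det = 0 := by
    rw [← Matrix.exists_mulVec_eq_zero_iff]
    exact ⟨v, hv, by
      rw [Matrix.sub_mulVec, Matrix.smul_mulVec, Matrix.one_mulVec, h, sub_self]⟩
  have heval : (M.charpoly).eval c = 0 := by
    have h1 : (M.charpoly).eval c = ((charmatrix M).map (Polynomial.evalRingHom c)).det := by
      rw [Matrix.charpoly]
      exact (RingHom.map_det (Polynomial.evalRingHom c) (charmatrix M))
    have h2 : (charmatrix M).map (Polynomial.evalRingHom c)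
        = c • (1 : Matrix (Fin n) (Fin n) ℝ) - M := by
      ext i j
      by_cases hij : i = j
      · subst hij
        simp [Matrix.map_apply, Matrix.one_apply, Matrix.sub_apply]
      · simp [Matrix.map_apply, charmatrix_apply_ne M _ _ hij, Matrix.one_apply, hij,
          Matrix.sub_apply]
    rw [h1, h2, hdet]
  have : ((c : ℝ) : ℂ) = algebraMap ℝ ℂ c := rfl
  rw [this, Polynomial.aeval_algebraMap_apply]
  rw [show (Polynomial.aeval c) M.charpoly = (M.charpoly).eval c from by
    rw [← Polynomial.coe_aeval_eq_eval]]
  rw [heval, map_zero]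




variable {n : ℕ}

lemma feasible_bound (hn : 1 ≤ n) (A : Matrix (Fin n) (Fin n) ℝ)
    (hA : ∀ i j, 0 ≤ A i j) (c : ℝ) (u : Fin n → ℝ)
    (hu0 : ∀ i, 0 ≤ u i) (husum : (∑ i, u i) = 1)
    (hineq : ∀ i, c * u i ≤ A.mulVec u i) :
    c ≤ n * (∑ i, ∑ j, A i j) := by
  set K : ℝ := ∑ i, ∑ j, A i j with hK
  have hK0 : 0 ≤ K :=
    Finset.sum_nonneg fun i _ => Finset.sum_nonneg fun j _ => hA i j
  have hexist : ∃ i, (1 : ℝ) / n ≤ u i := by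
    by_contra h
    push_neg at h
    have h1 : (∑ i, u i) < ∑ _i : Fin n, (1 : ℝ) / n :=
      Finset.sum_lt_sum_of_nonempty (by
        have : Nonempty (Fin n) := Fin.pos_iff_nonempty.mp hn
        exact Finset.univ_nonempty) (fun i _ => h i)
    have h2 : (∑ _i : Fin n, (1 : ℝ) / n) = 1 := by
      rw [Finset.sum_const, Finset.card_univ, Fintype.card_fin, nsmul_eq_mul]
      field_simp
    rw [husum, h2] at h1
    exact lt_irrefl _ h1
  obtain ⟨i, hi⟩ := hexist
  have hu1 : ∀ j, u j ≤ 1 := by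
    intro j
    rw [← husum]
    exact Finset.single_le_sum (fun l _ => hu0 l) (Finset.mem_univ j)
  have hrow : A.mulVec u i ≤ K := by
    have h1 : A.mulVec u i ≤ ∑ j, A i j := by
      rw [Matrix.mulVec, dotProduct]
      calc (∑ j, A i j * u j) ≤ ∑ j, A i j * 1 :=
            Finset.sum_le_sum fun j _ => mul_le_mul_of_nonneg_left (hu1 j) (hA i j)
        _ = ∑ j, A i j := by simp
    refine le_trans h1 ?_
    exact Finset.single_le_sum (f := fun i => ∑ j, A i j)
      (fun l _ => Finset.sum_nonneg fun j _ => hA l j) (Finset.mem_univ i)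
  have hcu : c * u i ≤ K := le_trans (hineq i) hrow
  rcases le_or_gt c 0 with hc | hc
  · have : (0:ℝ) ≤ n * K := by positivity
    linarith
  · have hnpos : (0:ℝ) < n := by exact_mod_cast hn
    have h1 : (1:ℝ) ≤ n * u i := by
      rw [div_le_iff₀ hnpos] at hi
      linarith [hi]
    calc c = c * 1 := by ring
      _ ≤ c * (n * u i) := by
          exact mul_le_mul_of_nonneg_left h1 (le_of_lt hc)
      _ = n * (c * u i) := by ring
      _ ≤ n * K := by
          exact mul_le_mul_of_nonneg_left hcu (le_of_lt hnpos)

/-- Normalization: scale a nonneg nonzero subinvariant vector to the simplex. -/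
lemma normalize_vec (A : Matrix (Fin n) (Fin n) ℝ) (c : ℝ) (v : Fin n → ℝ)
    (hv0 : ∀ i, 0 ≤ v i) (hvne : v ≠ 0) (hineq : ∀ i, c * v i ≤ A.mulVec v i) :
    ∃ u : Fin n → ℝ, (∀ i, 0 ≤ u i ∧ u i ≤ 1) ∧ (∑ i, u i) = 1 ∧
      (∀ i, c * u i ≤ A.mulVec u i) := by
  have hvex : ∃ i, 0 < v i := by
    by_contra h
    push_neg at h
    exact hvne (funext fun i => le_antisymm (h i) (hv0 i))
  have hs : 0 < ∑ i, v i := by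
    obtain ⟨i, hi⟩ := hvex
    exact Finset.sum_pos' (fun l _ => hv0 l) ⟨i, Finset.mem_univ i, hi⟩
  refine ⟨(∑ i, v i)⁻¹ • v, fun i => ⟨?_, ?_⟩, ?_, ?_⟩
  · exact mul_nonneg (inv_nonneg.mpr (le_of_lt hs)) (hv0 i)
  · show (∑ j, v j)⁻¹ * v i ≤ 1
    rw [inv_mul_le_iff₀ hs, mul_one]
    exact Finset.single_le_sum (fun l _ => hv0 l) (Finset.mem_univ i)
  · show (∑ i, (∑ j, v j)⁻¹ * v i) = 1
    rw [← Finset.mul_sum]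
    field_simp
  · intro i
    have h1 : A.mulVec ((∑ i, v i)⁻¹ • v) = (∑ i, v i)⁻¹ • A.mulVec v := by
      rw [Matrix.mulVec_smul]
    rw [h1]
    show c * ((∑ j, v j)⁻¹ * v i) ≤ (∑ j, v j)⁻¹ * A.mulVec v i
    have := mul_le_mul_of_nonneg_left (hineq i) (inv_nonneg.mpr (le_of_lt hs))
    calc c * ((∑ j, v j)⁻¹ * v i) = (∑ j, v j)⁻¹ * (c * v i) := by ring
      _ ≤ (∑ j, v j)⁻¹ * A.mulVec v i := this


/-- Collatz–Wielandt / Perron: a nonnegative irreducible matrix with a nonnegative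
nonzero `β`-subinvariant vector has a real eigenvalue `≥ β`. -/
theorem perron (hn : 1 ≤ n) (A : Matrix (Fin n) (Fin n) ℝ)
    (hA : ∀ i j, 0 ≤ A i j)
    (hirr : ∀ i j, ∃ k : ℕ, 0 < k ∧ 0 < (A ^ k) i j)
    (x : Fin n → ℝ) (hx0 : ∀ i, 0 ≤ x i) (hxne : x ≠ 0) (β : ℝ)
    (hineq : ∀ i, β * x i ≤ A.mulVec x i) :
    ∃ c, β ≤ c ∧ ∃ v : Fin n → ℝ, v ≠ 0 ∧ A.mulVec v = c • v := by
  haveI : Nonempty (Fin n) := Fin.pos_iff_nonempty.mp hn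
  set K : ℝ := ∑ i, ∑ j, A i j with hKdef
  have hK0 : 0 ≤ K :=
    Finset.sum_nonneg fun i _ => Finset.sum_nonneg fun j _ => hA i j
  set M : ℝ := n * K + |β| + 1 with hMdef
  have hβM : β ≤ M := by
    have h1 : β ≤ |β| := le_abs_self β
    have h2 : (0:ℝ) ≤ n * K := by positivity
    linarith
  have hnKM : n * K ≤ M := by
    have := abs_nonneg β; linarith
  -- the feasible set
  set S : Set (ℝ × (Fin n → ℝ)) :=
    {p | (β ≤ p.1 ∧ p.1 ≤ M) ∧ (∀ i, 0 ≤ p.2 i ∧ p.2 i ≤ 1) ∧ (∑ i, p.2 i) = 1 ∧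
        ∀ i, p.1 * p.2 i ≤ A.mulVec p.2 i} with hSdef
  -- S is compact
  have hSsub : S ⊆ (Set.Icc β M) ×ˢ (Set.Icc (0 : Fin n → ℝ) 1) := by
    rintro ⟨c, u⟩ ⟨⟨h1, h2⟩, h3, _, _⟩
    refine ⟨⟨h1, h2⟩, ?_, ?_⟩
    · intro i; exact (h3 i).1
    · intro i; exact (h3 i).2
  have hSclosed : IsClosed S := by
    have hmv : ∀ i : Fin n, Continuous fun p : ℝ × (Fin n → ℝ) => A.mulVec p.2 i := by
      intro i
      have : (fun p : ℝ × (Fin n → ℝ) => A.mulVec p.2 i)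
          = fun p => ∑ j, A i j * p.2 j := by
        funext p; rw [Matrix.mulVec, dotProduct]
      rw [this]
      exact continuous_finset_sum _ fun j _ =>
        continuous_const.mul ((continuous_apply j).comp continuous_snd)
    have h1 : IsClosed {p : ℝ × (Fin n → ℝ) | β ≤ p.1 ∧ p.1 ≤ M} :=
      (isClosed_le continuous_const continuous_fst).inter
        (isClosed_le continuous_fst continuous_const)
    have h2 : IsClosed {p : ℝ × (Fin n → ℝ) | ∀ i, 0 ≤ p.2 i ∧ p.2 i ≤ 1} := by
      have : {p : ℝ × (Fin n → ℝ) | ∀ i, 0 ≤ p.2 i ∧ p.2 i ≤ 1}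
          = ⋂ i, ({p : ℝ × (Fin n → ℝ) | 0 ≤ p.2 i} ∩ {p | p.2 i ≤ 1}) := by
        ext p; simp [Set.mem_iInter, forall_and]
      rw [this]
      exact isClosed_iInter fun i =>
        (isClosed_le continuous_const ((continuous_apply i).comp continuous_snd)).inter
          (isClosed_le ((continuous_apply i).comp continuous_snd) continuous_const)
    have h3 : IsClosed {p : ℝ × (Fin n → ℝ) | (∑ i, p.2 i) = 1} :=
      isClosed_eq (continuous_finset_sum _ fun i _ =>
        (continuous_apply i).comp continuous_snd) continuous_const
    have h4 : IsClosed {p : ℝ × (Fin n → ℝ) | ∀ i, p.1 * p.2 i ≤ A.mulVec p.2 i} := by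
      have : {p : ℝ × (Fin n → ℝ) | ∀ i, p.1 * p.2 i ≤ A.mulVec p.2 i}
          = ⋂ i, {p : ℝ × (Fin n → ℝ) | p.1 * p.2 i ≤ A.mulVec p.2 i} := by
        ext p; simp [Set.mem_iInter]
      rw [this]
      exact isClosed_iInter fun i =>
        isClosed_le (continuous_fst.mul ((continuous_apply i).comp continuous_snd)) (hmv i)
    have : S = {p : ℝ × (Fin n → ℝ) | β ≤ p.1 ∧ p.1 ≤ M}
        ∩ ({p | ∀ i, 0 ≤ p.2 i ∧ p.2 i ≤ 1}
          ∩ ({p | (∑ i, p.2 i) = 1} ∩ {p | ∀ i, p.1 * p.2 i ≤ A.mulVec p.2 i})) := by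
      ext p; simp only [hSdef, Set.mem_setOf_eq, Set.mem_inter_iff]
    rw [this]
    exact h1.inter (h2.inter (h3.inter h4))
  have hScompact : IsCompact S :=
    IsCompact.of_isClosed_subset (isCompact_Icc.prod isCompact_Icc) hSclosed hSsub
  -- S is nonempty
  have hSne : S.Nonempty := by
    obtain ⟨u, hu1, hu2, hu3⟩ := normalize_vec A β x hx0 hxne hineq
    exact ⟨(β, u), ⟨le_refl β, hβM⟩, hu1, hu2, hu3⟩
  obtain ⟨⟨c, w⟩, hmem, hmax⟩ :=
    hScompact.exists_isMaxOn hSne continuous_fst.continuousOn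
  obtain ⟨⟨hβc, hcM⟩, hw01, hwsum, hwineq⟩ := hmem
  have hw0 : ∀ i, 0 ≤ w i := fun i => (hw01 i).1
  have hwne : w ≠ 0 := by
    intro h
    rw [h] at hwsum
    simp at hwsum
  refine ⟨c, hβc, ?_⟩
  -- show w is an eigenvector
  by_cases hy : A.mulVec w - c • w = 0
  · exact ⟨w, hwne, by
      have := sub_eq_zero.mp hy
      exact this⟩
  · exfalso
    set y : Fin n → ℝ := A.mulVec w - c • w with hydef
    have hy0 : ∀ i, 0 ≤ y i := by
      intro i
      simp only [hydef, Pi.sub_apply, Pi.smul_apply, smul_eq_mul, sub_nonneg]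
      exact hwineq i
    -- build the positive matrix P
    choose kk hkk1 hkk2 using hirr
    set N : ℕ := Finset.univ.sup (fun p : Fin n × Fin n => kk p.1 p.2) with hNdef
    set P : Matrix (Fin n) (Fin n) ℝ := ∑ m ∈ Finset.range (N + 1), A ^ m with hPdef
    have hPpos : ∀ i j, 0 < P i j := by
      intro i j
      have hmem' : kk i j ∈ Finset.range (N + 1) := by
        rw [Finset.mem_range, Nat.lt_succ_iff]
        exact Finset.le_sup (f := fun p : Fin n × Fin n => kk p.1 p.2)
          (Finset.mem_univ (i, j))
      have hsum : P i j = ∑ m ∈ Finset.range (N + 1), (A ^ m) i j := by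
        simp [hPdef, Matrix.sum_apply]
      rw [hsum]
      have h1 : ∀ m ∈ Finset.range (N + 1), 0 ≤ (A ^ m) i j := fun m _ =>
        (entry_pow_le hA (fun _ _ => le_refl _) m).1 i j
      calc (0:ℝ) < (A ^ (kk i j)) i j := hkk2 i j
        _ ≤ ∑ m ∈ Finset.range (N + 1), (A ^ m) i j :=
            Finset.single_le_sum h1 hmem'
    have hcomm : A * P = P * A := by
      simp only [hPdef, Finset.mul_sum, Finset.sum_mul]
      refine Finset.sum_congr rfl fun m _ => ?_
      rw [← pow_succ, ← pow_succ']
    -- z and its positivity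
    set z : Fin n → ℝ := P.mulVec w with hzdef
    have hmulpos : ∀ (v : Fin n → ℝ), (∀ i, 0 ≤ v i) → v ≠ 0 → ∀ i, 0 < P.mulVec v i := by
      intro v hv0 hvne i
      have hvex : ∃ j, 0 < v j := by
        by_contra h
        push_neg at h
        exact hvne (funext fun j => le_antisymm (h j) (hv0 j))
      obtain ⟨j, hj⟩ := hvex
      rw [Matrix.mulVec, dotProduct]
      exact Finset.sum_pos' (fun l _ => mul_nonneg (le_of_lt (hPpos i l)) (hv0 l))
        ⟨j, Finset.mem_univ j, mul_pos (hPpos i j) hj⟩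
    have hz : ∀ i, 0 < z i := hmulpos w hw0 hwne
    set wv : Fin n → ℝ := P.mulVec y with hwvdef
    have hwv : ∀ i, 0 < wv i := hmulpos y hy0 hy
    -- A z = c z + wv
    have hAz : A.mulVec z = c • z + wv := by
      have h1 : A.mulVec z = P.mulVec (A.mulVec w) := by
        rw [hzdef, Matrix.mulVec_mulVec, Matrix.mulVec_mulVec, hcomm]
      have h2 : A.mulVec w = c • w + y := by
        simp [hydef]
      rw [h1, h2, Matrix.mulVec_add, Matrix.mulVec_smul]
    -- ε
    set ε : ℝ := Finset.univ.inf' Finset.univ_nonempty (fun i => wv i / z i) with hεdef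
    have hε : 0 < ε := by
      rw [hεdef, Finset.lt_inf'_iff]
      intro i _
      exact div_pos (hwv i) (hz i)
    have hstep : ∀ i, (c + ε) * z i ≤ A.mulVec z i := by
      intro i
      have h1 : ε ≤ wv i / z i :=
        Finset.inf'_le _ (Finset.mem_univ i)
      have h2 : ε * z i ≤ wv i := by
        rw [← div_mul_cancel₀ (wv i) (ne_of_gt (hz i))]
        exact mul_le_mul_of_nonneg_right h1 (le_of_lt (hz i))
      have h3 : A.mulVec z i = c * z i + wv i := by
        rw [hAz]; simp
      rw [h3]; nlinarith [h2]
    -- normalize and contradict maximality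
    have hzne : z ≠ 0 := by
      intro h
      have := hz (Classical.arbitrary (Fin n))
      rw [h] at this
      simp at this
    obtain ⟨u, hu1, hu2, hu3⟩ :=
      normalize_vec A (c + ε) z (fun i => le_of_lt (hz i)) hzne hstep
    have hbnd : c + ε ≤ n * K :=
      feasible_bound hn A hA (c + ε) u (fun i => (hu1 i).1) hu2 hu3
    have hβc' : β ≤ c := hβc
    have hmemS : ((c + ε, u) : ℝ × (Fin n → ℝ)) ∈ S := by
      refine ⟨⟨?_, ?_⟩, hu1, hu2, hu3⟩
      · show β ≤ c + ε; linarith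
      · show c + ε ≤ M; linarith
    have h5 : c + ε ≤ c := hmax hmemS
    linarith


/-- Irreducibility transfers upward along entrywise domination (after positive scaling). -/
lemma irr_of_le {c : ℝ} (hc : 0 < c) {B A : Matrix (Fin n) (Fin n) ℝ}
    (hB : ∀ i j, 0 ≤ B i j) (hle : ∀ i j, c * B i j ≤ A i j)
    (hirr : ∀ i j, ∃ k : ℕ, 0 < k ∧ 0 < (B ^ k) i j) :
    ∀ i j, ∃ k : ℕ, 0 < k ∧ 0 < (A ^ k) i j := by
  intro i j
  obtain ⟨k, hk, hpos⟩ := hirr i j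
  refine ⟨k, hk, ?_⟩
  have h1 : ∀ i j, 0 ≤ (c • B) i j := by
    intro i j; simp only [Matrix.smul_apply, smul_eq_mul]
    exact mul_nonneg (le_of_lt hc) (hB i j)
  have h2 : ∀ i j, (c • B) i j ≤ A i j := by
    intro i j; simpa using hle i j
  have h3 := (entry_pow_le h1 h2 k).2 i j
  have h4 : ((c • B) ^ k) i j = c ^ k * (B ^ k) i j := by
    rw [_root_.smul_pow]; simp
  have h5 : 0 < c ^ k * (B ^ k) i j := mul_pos (pow_pos hc k) hpos
  rw [h4] at h3
  linarith

lemma abs_mulVec_le (A : Matrix (Fin n) (Fin n) ℝ) (hA : ∀ i j, 0 ≤ A i j)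
    (W : Fin n → ℝ) (i : Fin n) :
    |A.mulVec W i| ≤ A.mulVec (fun j => |W j|) i := by
  rw [Matrix.mulVec, Matrix.mulVec, dotProduct, dotProduct]
  refine le_trans (Finset.abs_sum_le_sum_abs _ _) (Finset.sum_le_sum fun j _ => ?_)
  rw [abs_mul, abs_of_nonneg (hA i j)]

lemma abs_ne_zero {W : Fin n → ℝ} (hW : W ≠ 0) : (fun j => |W j|) ≠ 0 := by
  intro h
  apply hW
  funext j
  have := congrFun h j
  simpa using abs_eq_zero.mp this

lemma subinv_abs (A : Matrix (Fin n) (Fin n) ℝ) (hA : ∀ i j, 0 ≤ A i j)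
    (W : Fin n → ℝ) (g : Fin n → ℝ) (β : ℝ) (hβ : 0 ≤ β) (hg : ∀ i, β ≤ g i)
    (h : ∀ i, A.mulVec W i = g i * W i) :
    ∀ i, β * |W i| ≤ A.mulVec (fun j => |W j|) i := by
  intro i
  have h1 : β * |W i| ≤ g i * |W i| :=
    mul_le_mul_of_nonneg_right (hg i) (abs_nonneg _)
  have h2 : g i * |W i| = |A.mulVec W i| := by
    rw [h i, abs_mul, abs_of_nonneg (le_trans hβ (hg i))]
  exact le_trans (h1.trans_eq h2) (abs_mulVec_le A hA W i)


end Stmt14Aux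

/-- For `B` nonnegative irreducible and `D` diagonal with strictly positive diagonal
entries, `λ_max(B - D) = 0` if and only if the Perron root of `D⁻¹ B` equals `1`. -/
theorem stmt_14 {n : ℕ} (hn : 1 ≤ n)
    (B D : Matrix (Fin n) (Fin n) ℝ)
    (hBnn : ∀ i j, 0 ≤ B i j)
    (hBirr : ∀ i j, ∃ k : ℕ, 0 < k ∧ 0 < (B ^ k) i j)
    (hDdiag : D.IsDiag) (hDpos : ∀ i, 0 < D i i)
    (l0 l1 : ℝ)
    (hl0 : IsLamMax (B - D) l0)
    (hl1 : IsLamMax (D⁻¹ * B) l1) :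
    l0 = 0 ↔ l1 = 1 := by
  haveI : Nonempty (Fin n) := Fin.pos_iff_nonempty.mp hn
  set d : Fin n → ℝ := fun i => D i i with hddef
  have hd : ∀ i, 0 < d i := hDpos
  have hDeq : D = Matrix.diagonal d := by
    ext i j
    by_cases h : i = j
    · subst h; simp [Matrix.diagonal_apply_eq, hddef]
    · rw [Matrix.diagonal_apply_ne _ h]
      exact hDdiag h
  set E : Matrix (Fin n) (Fin n) ℝ := Matrix.diagonal (fun i => (d i)⁻¹) with hEdef
  have hDE : D * E = 1 := by
    rw [hDeq, hEdef, Matrix.diagonal_mul_diagonal]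
    rw [show (fun i => d i * (d i)⁻¹) = fun _ => (1:ℝ) from funext fun i =>
      mul_inv_cancel₀ (ne_of_gt (hd i))]
    exact Matrix.diagonal_one
  have hED : E * D = 1 := by
    rw [hDeq, hEdef, Matrix.diagonal_mul_diagonal]
    rw [show (fun i => (d i)⁻¹ * d i) = fun _ => (1:ℝ) from funext fun i =>
      inv_mul_cancel₀ (ne_of_gt (hd i))]
    exact Matrix.diagonal_one
  have hDinv : D⁻¹ = E := Matrix.inv_eq_right_inv hDE
  rw [hDinv] at hl1
  -- basic entries
  have hEB : ∀ (v : Fin n → ℝ) (i : Fin n),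
      (E * B).mulVec v i = (d i)⁻¹ * B.mulVec v i := by
    intro v i
    rw [← Matrix.mulVec_mulVec, hEdef, Matrix.mulVec_diagonal]
  have hEBnn : ∀ i j, 0 ≤ (E * B) i j := by
    intro i j
    rw [hEdef, Matrix.diagonal_mul]
    exact mul_nonneg (inv_nonneg.mpr (le_of_lt (hd i))) (hBnn i j)
  -- extremes of d
  set dmin : ℝ := Finset.univ.inf' Finset.univ_nonempty d with hdmindef
  set dmax : ℝ := Finset.univ.sup' Finset.univ_nonempty d with hdmaxdef
  have hdmin : 0 < dmin := by
    rw [hdmindef, Finset.lt_inf'_iff]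
    intro i _; exact hd i
  have hdminle : ∀ i, dmin ≤ d i := fun i => Finset.inf'_le _ (Finset.mem_univ i)
  have hdmaxle : ∀ i, d i ≤ dmax := fun i => Finset.le_sup' _ (Finset.mem_univ i)
  have hdmax : 0 < dmax := lt_of_lt_of_le (hd (Classical.arbitrary _)) (hdmaxle _)
  -- irreducibility of E * B
  have hEBirr : ∀ i j, ∃ k : ℕ, 0 < k ∧ 0 < ((E * B) ^ k) i j := by
    refine Stmt14Aux.irr_of_le (c := dmax⁻¹) (inv_pos.mpr hdmax) hBnn ?_ hBirr
    intro i j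
    rw [hEdef, Matrix.diagonal_mul]
    exact mul_le_mul_of_nonneg_right (inv_anti₀ (hd i) (hdmaxle i)) (hBnn i j)
  -- D mulVec
  have hDmv : ∀ (v : Fin n → ℝ) (i : Fin n), D.mulVec v i = d i * v i := by
    intro v i
    rw [hDeq, Matrix.mulVec_diagonal]
  constructor
  · -- l0 = 0 → l1 = 1
    intro hl00
    -- Step 1 : 1 ≤ l1
    obtain ⟨Z, hZne, hZeig⟩ := hl0.1
    rw [hl00, zero_smul] at hZeig
    have hBZ : B.mulVec Z = D.mulVec Z := by
      funext i
      have h := congrFun hZeig i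
      rw [Matrix.sub_mulVec] at h
      simp only [Pi.sub_apply, Pi.zero_apply] at h
      linarith
    have hEBZ : (E * B).mulVec Z = (1 : ℝ) • Z := by
      rw [one_smul]
      rw [← Matrix.mulVec_mulVec, hBZ, Matrix.mulVec_mulVec, hED, Matrix.one_mulVec]
    have h1le : (1:ℝ) ≤ l1 := by
      have hroot := Stmt14Aux.eig_root (E * B) 1 Z hZne hEBZ
      have := hl1.2 ((1:ℝ):ℂ) hroot
      simpa using this
    -- Step 2 : l1 ≤ 1
    by_contra hne
    have hl1gt : 1 < l1 := lt_of_le_of_ne h1le (fun h => hne h.symm)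
    obtain ⟨W, hWne, hWeig⟩ := hl1.1
    have hBW : ∀ i, B.mulVec W i = l1 * d i * W i := by
      intro i
      have h1 : (d i)⁻¹ * B.mulVec W i = l1 * W i := by
        rw [← hEB]; rw [hWeig]; simp
      have h2 := congrArg (fun t => d i * t) h1
      rw [← mul_assoc, mul_inv_cancel₀ (ne_of_gt (hd i)), one_mul] at h2
      rw [h2]; ring
    -- the shifted matrix
    set A : Matrix (Fin n) (Fin n) ℝ := B - D + dmax • (1 : Matrix (Fin n) (Fin n) ℝ)
      with hAdef
    have hAentry : ∀ i j, A i j = B i j - D i j + (if i = j then dmax else 0) := by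
      intro i j
      simp [hAdef, Matrix.one_apply, Matrix.sub_apply, Matrix.smul_apply, mul_comm]
    have hAnn : ∀ i j, 0 ≤ A i j := by
      intro i j
      rw [hAentry]
      by_cases h : i = j
      · subst h
        rw [if_pos rfl]
        have h1 : D i i = d i := rfl
        rw [h1]
        linarith [hBnn i i, hdmaxle i, hd i]
      · rw [hDdiag h, if_neg h]
        simpa using hBnn i j
    have hAge : ∀ i j, 1 * B i j ≤ A i j := by
      intro i j
      rw [one_mul, hAentry]
      by_cases h : i = j
      · subst h
        rw [if_pos rfl]
        have h1 : D i i = d i := rfl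
        rw [h1]
        linarith [hdmaxle i]
      · rw [hDdiag h, if_neg h]
        simp
    have hAirr := Stmt14Aux.irr_of_le one_pos hBnn hAge hBirr
    -- A *ᵥ W
    have hAW : ∀ i, A.mulVec W i = ((l1 - 1) * d i + dmax) * W i := by
      intro i
      rw [hAdef, Matrix.add_mulVec, Matrix.sub_mulVec, Matrix.smul_mulVec,
        Matrix.one_mulVec]
      simp only [Pi.add_apply, Pi.sub_apply, Pi.smul_apply, smul_eq_mul]
      rw [hBW i, hDmv]
      ring
    set β : ℝ := (l1 - 1) * dmin + dmax with hβdef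
    have hβpos : 0 < β := by
      have : 0 < (l1 - 1) * dmin := mul_pos (by linarith) hdmin
      linarith
    have hsub := Stmt14Aux.subinv_abs A hAnn W (fun i => (l1 - 1) * d i + dmax) β (le_of_lt hβpos)
      (fun i => by
        show β ≤ (l1 - 1) * d i + dmax
        have h1 : (l1 - 1) * dmin ≤ (l1 - 1) * d i :=
          mul_le_mul_of_nonneg_left (hdminle i) (by linarith)
        rw [hβdef]; linarith) hAW
    obtain ⟨c, hc, v, hvne, hveig⟩ := Stmt14Aux.perron hn A hAnn hAirr (fun j => |W j|)
      (fun j => abs_nonneg _) (Stmt14Aux.abs_ne_zero hWne) β hsub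
    -- eigenvalue of B - D
    have hBD : (B - D).mulVec v = (c - dmax) • v := by
      have h1 : (B - D).mulVec v = A.mulVec v - dmax • v := by
        rw [hAdef, Matrix.add_mulVec, Matrix.smul_mulVec, Matrix.one_mulVec]
        abel
      rw [h1, hveig, sub_smul]
    have hroot := Stmt14Aux.eig_root (B - D) (c - dmax) v hvne hBD
    have hle := hl0.2 (((c - dmax : ℝ)) : ℂ) hroot
    rw [hl00] at hle
    simp only [Complex.ofReal_re] at hle
    have : 0 < (l1 - 1) * dmin := mul_pos (by linarith) hdmin
    have : β ≤ c := hc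
    rw [hβdef] at this
    linarith
  · -- l1 = 1 → l0 = 0
    intro hl11
    -- Step 1 : 0 ≤ l0
    obtain ⟨W, hWne, hWeig⟩ := hl1.1
    rw [hl11, one_smul] at hWeig
    have hBW : ∀ i, B.mulVec W i = d i * W i := by
      intro i
      have h1 : (d i)⁻¹ * B.mulVec W i = W i := by
        rw [← hEB, hWeig]
      have h2 := congrArg (fun t => d i * t) h1
      rw [← mul_assoc, mul_inv_cancel₀ (ne_of_gt (hd i)), one_mul] at h2
      exact h2
    have hBDW : (B - D).mulVec W = (0 : ℝ) • W := by
      rw [zero_smul]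
      funext i
      rw [Matrix.sub_mulVec]
      simp only [Pi.sub_apply, Pi.zero_apply]
      rw [hBW i, hDmv]
      ring
    have h0le : (0:ℝ) ≤ l0 := by
      have hroot := Stmt14Aux.eig_root (B - D) 0 W hWne hBDW
      have := hl0.2 (((0:ℝ)) : ℂ) hroot
      simpa using this
    -- Step 2 : l0 ≤ 0
    by_contra hne
    have hl0gt : 0 < l0 := lt_of_le_of_ne h0le (fun h => hne h.symm)
    obtain ⟨Z, hZne, hZeig⟩ := hl0.1
    have hBZ : ∀ i, B.mulVec Z i = (d i + l0) * Z i := by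
      intro i
      have := congrFun hZeig i
      rw [Matrix.sub_mulVec] at this
      simp only [Pi.sub_apply, Pi.smul_apply, smul_eq_mul] at this
      rw [hDmv] at this
      nlinarith [this]
    have hEBZ : ∀ i, (E * B).mulVec Z i = (1 + l0 * (d i)⁻¹) * Z i := by
      intro i
      rw [hEB, hBZ i]
      have hne' : d i ≠ 0 := ne_of_gt (hd i)
      field_simp
    set β : ℝ := 1 + l0 * dmax⁻¹ with hβdef
    have hβgt : 1 < β := by
      have : 0 < l0 * dmax⁻¹ := mul_pos hl0gt (inv_pos.mpr hdmax)
      rw [hβdef]; linarith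
    have hsub := Stmt14Aux.subinv_abs (E * B) hEBnn Z (fun i => 1 + l0 * (d i)⁻¹) β
      (by linarith)
      (fun i => by
        show β ≤ 1 + l0 * (d i)⁻¹
        have h1 : dmax⁻¹ ≤ (d i)⁻¹ := inv_anti₀ (hd i) (hdmaxle i)
        have h2 : l0 * dmax⁻¹ ≤ l0 * (d i)⁻¹ :=
          mul_le_mul_of_nonneg_left h1 (le_of_lt hl0gt)
        rw [hβdef]; linarith) hEBZ
    obtain ⟨c, hc, v, hvne, hveig⟩ := Stmt14Aux.perron hn (E * B) hEBnn hEBirr (fun j => |Z j|)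
      (fun j => abs_nonneg _) (Stmt14Aux.abs_ne_zero hZne) β hsub
    have hroot := Stmt14Aux.eig_root (E * B) c v hvne hveig
    have hle := hl1.2 ((c : ℝ) : ℂ) hroot
    rw [hl11] at hle
    simp only [Complex.ofReal_re] at hle
    linarith
end
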